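/- arXiv:2507.11784 — 5 statements merged into one kernel-verified Lean document; each statement's English description precedes it below -/
import Mathlib

section
/- The projected Gamma density PG(θ|α₁,α₂,β) = β^{α₂} cos(θ)^{α₁-1} sin(θ)^{α₂-1} / (B(α₁,α₂) (cos θ + β sin θ)^{α₁+α₂}) integrates to 1 over θ ∈ [0, π/2]. -/
open Real MeasureTheory intervalIntegral Set

lemma betaEqOn (p q : ℝ) :
    Set.EqOn (fun x : ℝ => ((x:ℂ) ^ ((p:ℂ) - 1) * ((1:ℂ) - (x:ℂ)) ^ ((q:ℂ) - 1)))
      (fun x : ℝ => ((x ^ (p - 1) * (1 - x) ^ (q - 1) : ℝ) : ℂ)) (Set.Icc 0 1) := by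
  intro x hx
  have h1 : ((x ^ (p-1) : ℝ) : ℂ) = (x:ℂ) ^ ((p:ℂ) - 1) := by
    rw [Complex.ofReal_cpow hx.1]
    push_cast; ring_nf
  have h2 : (((1-x) ^ (q-1) : ℝ) : ℂ) = ((1:ℂ) - (x:ℂ)) ^ ((q:ℂ) - 1) := by
    rw [Complex.ofReal_cpow (by linarith [hx.2] : (0:ℝ) ≤ 1 - x)]
    push_cast; ring_nf
  simp only [Complex.ofReal_mul, h1, h2]

lemma betaIntegrable (p q : ℝ) (hp : 0 < p) (hq : 0 < q) :
    IntervalIntegrable (fun x : ℝ => x ^ (p - 1) * (1 - x) ^ (q - 1)) volume 0 1 := by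
  have h := Complex.betaIntegral_convergent (u := p) (v := q) (by simpa) (by simpa)
  rw [intervalIntegrable_iff] at h ⊢
  have h' : IntegrableOn (fun x : ℝ => ((x ^ (p-1) * (1-x) ^ (q-1) : ℝ) : ℂ))
      (Set.uIoc (0:ℝ) 1) volume := by
    refine h.congr_fun ?_ measurableSet_uIoc
    intro x hx
    exact (betaEqOn p q (by rw [Set.uIoc_of_le (by norm_num)] at hx; exact ⟨hx.1.le, hx.2⟩))
  have := h'.re
  simpa [IntegrableOn] using this

lemma betaIntegralVal (p q : ℝ) (hp : 0 < p) (hq : 0 < q) :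
    ∫ x in (0:ℝ)..1, x ^ (p - 1) * (1 - x) ^ (q - 1)
      = Real.Gamma p * Real.Gamma q / Real.Gamma (p + q) := by
  have h1 : Complex.betaIntegral p q
      = ((∫ x in (0:ℝ)..1, x ^ (p-1) * (1-x) ^ (q-1) : ℝ) : ℂ) := by
    rw [Complex.betaIntegral, ← intervalIntegral.integral_ofReal]
    refine intervalIntegral.integral_congr ?_
    intro x hx
    rw [Set.uIcc_of_le (by norm_num : (0:ℝ) ≤ 1)] at hx
    exact betaEqOn p q hx
  have h2 := Complex.Gamma_mul_Gamma_eq_betaIntegral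
    (s := p) (t := q) (by simpa) (by simpa)
  rw [h1] at h2
  have h3 : ((Real.Gamma p * Real.Gamma q : ℝ) : ℂ)
      = ((Real.Gamma (p+q) * ∫ x in (0:ℝ)..1, x ^ (p-1) * (1-x) ^ (q-1) : ℝ) : ℂ) := by
    push_cast [← Complex.Gamma_ofReal]
    simpa using h2
  have h4 := Complex.ofReal_injective h3
  have hG : Real.Gamma (p + q) ≠ 0 := (Real.Gamma_pos_of_pos (by linarith)).ne'
  field_simp
  linarith [h4]

/-- The projected Gamma density on `[0, π/2]`, with
`B(α₁,α₂) = Γ(α₁)Γ(α₂)/Γ(α₁+α₂)` the Beta function. -/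
noncomputable def PG (a1 a2 b θ : ℝ) : ℝ :=
  b ^ a2 * Real.cos θ ^ (a1 - 1) * Real.sin θ ^ (a2 - 1) /
    (Real.Gamma a1 * Real.Gamma a2 / Real.Gamma (a1 + a2) *
      (Real.cos θ + b * Real.sin θ) ^ (a1 + a2))

/-- the projected Gamma density integrates to 1 over `[0, π/2]`. -/
theorem PG_integral_eq_one (a1 a2 b : ℝ) (ha1 : 0 < a1) (ha2 : 0 < a2) (hb : 0 < b) :
    ∫ θ in (0:ℝ)..(π / 2), PG a1 a2 b θ = 1 := by
  have hGa12 : 0 < Real.Gamma (a1 + a2) := Real.Gamma_pos_of_pos (by linarith)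
  set B := Real.Gamma a1 * Real.Gamma a2 / Real.Gamma (a1 + a2) with hBdef
  have hBpos : 0 < B :=
    div_pos (mul_pos (Real.Gamma_pos_of_pos ha1) (Real.Gamma_pos_of_pos ha2)) hGa12
  set D : ℝ → ℝ := fun θ => Real.cos θ + b * Real.sin θ with hDdef
  set f : ℝ → ℝ := fun θ => b * Real.sin θ / D θ with hfdef
  set g : ℝ → ℝ := fun x => x ^ (a2 - 1) * (1 - x) ^ (a1 - 1) with hgdef
  have hpi : (0:ℝ) < π / 2 := by positivity
  have hD : ∀ θ ∈ Icc (0:ℝ) (π/2), 0 < D θ := by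
    intro θ hθ
    have hc : 0 ≤ Real.cos θ :=
      Real.cos_nonneg_of_mem_Icc ⟨by linarith [hθ.1], hθ.2⟩
    have hs : 0 ≤ Real.sin θ :=
      Real.sin_nonneg_of_nonneg_of_le_pi hθ.1 (by linarith [hθ.2, Real.pi_pos])
    have hsq := Real.sin_sq_add_cos_sq θ
    have hc1 := Real.cos_le_one θ
    have hs1 := Real.sin_le_one θ
    simp only [hDdef]
    rcases hc.lt_or_eq with hc0 | hc0
    · nlinarith [mul_nonneg hb.le hs]
    · have hs1 : Real.sin θ = 1 := by nlinarith
      rw [← hc0, hs1]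
      simpa using hb
  have hderiv : ∀ θ ∈ Icc (0:ℝ) (π/2), HasDerivAt f (b / D θ ^ 2) θ := by
    intro θ hθ
    have h1 : HasDerivAt (fun t => b * Real.sin t) (b * Real.cos θ) θ :=
      (Real.hasDerivAt_sin θ).const_mul b
    have h2 : HasDerivAt D (-Real.sin θ + b * Real.cos θ) θ :=
      (Real.hasDerivAt_cos θ).add ((Real.hasDerivAt_sin θ).const_mul b)
    have h3 := h1.div h2 (hD θ hθ).ne'
    have hnum : b * Real.cos θ * D θ - b * Real.sin θ * (-Real.sin θ + b * Real.cos θ) = b := by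
      simp only [hDdef]
      linear_combination b * Real.sin_sq_add_cos_sq θ
    rw [hnum] at h3
    exact h3
  have hDcont : Continuous D := by
    simp only [hDdef]; fun_prop
  have hfcont : ContinuousOn f (Icc 0 (π/2)) :=
    ((continuous_const.mul Real.continuous_sin).continuousOn).div hDcont.continuousOn
      (fun θ hθ => (hD θ hθ).ne')
  have hmem : ∀ θ ∈ Ioo (0:ℝ) (π/2), f θ ∈ Ioo (0:ℝ) 1 := by
    intro θ hθ
    have hc : 0 < Real.cos θ := Real.cos_pos_of_mem_Ioo ⟨by linarith [hθ.1], hθ.2⟩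
    have hs : 0 < Real.sin θ := Real.sin_pos_of_pos_of_lt_pi hθ.1 (by linarith [hθ.2, Real.pi_pos])
    have hDθ : 0 < D θ := hD θ (Ioo_subset_Icc_self hθ)
    constructor
    · exact div_pos (by positivity) hDθ
    · rw [div_lt_one hDθ]; simp only [hDdef]; linarith
  have hmem' : ∀ θ ∈ Icc (0:ℝ) (π/2), f θ ∈ Icc (0:ℝ) 1 := by
    intro θ hθ
    have hs : 0 ≤ Real.sin θ :=
      Real.sin_nonneg_of_nonneg_of_le_pi hθ.1 (by linarith [hθ.2, Real.pi_pos])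
    have hc : 0 ≤ Real.cos θ :=
      Real.cos_nonneg_of_mem_Icc ⟨by linarith [hθ.1], hθ.2⟩
    have hDθ : 0 < D θ := hD θ hθ
    constructor
    · exact div_nonneg (by positivity) hDθ.le
    · rw [div_le_one hDθ]; simp only [hDdef]; linarith
  have hgcont : ContinuousOn g (Ioo (0:ℝ) 1) := by
    apply ContinuousOn.mul
    · exact ContinuousOn.rpow_const continuousOn_id (fun x hx => Or.inl hx.1.ne')
    · refine ContinuousOn.rpow_const (continuousOn_const.sub continuousOn_id) ?_
      intro x hx
      exact Or.inl (sub_pos.mpr hx.2).ne'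
  have hgint : IntegrableOn g (Icc (0:ℝ) 1) := by
    have h := betaIntegrable a2 a1 ha2 ha1
    rw [intervalIntegrable_iff, uIoc_of_le (by norm_num : (0:ℝ) ≤ 1)] at h
    rw [integrableOn_Icc_iff_integrableOn_Ioc]
    exact h
  have hmono : StrictMonoOn f (Icc (0:ℝ) (π/2)) := by
    apply strictMonoOn_of_deriv_pos (convex_Icc _ _) hfcont
    intro x hx
    rw [interior_Icc] at hx
    rw [(hderiv x (Ioo_subset_Icc_self hx)).deriv]
    exact div_pos hb (pow_pos (hD x (Ioo_subset_Icc_self hx)) 2)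
  have hinj : InjOn f (Ioo (0:ℝ) (π/2)) := (hmono.injOn).mono Ioo_subset_Icc_self
  have himgIoo : f '' (Ioo (0:ℝ) (π/2)) ⊆ Ioo 0 1 := by
    rintro x ⟨θ, hθ, rfl⟩; exact hmem θ hθ
  have himgIcc : f '' (Icc (0:ℝ) (π/2)) ⊆ Icc 0 1 := by
    rintro x ⟨θ, hθ, rfl⟩; exact hmem' θ hθ
  have key : IntegrableOn (fun x => |b / D x ^ 2| • g (f x)) (Ioo 0 (π/2)) := by
    refine (integrableOn_image_iff_integrableOn_abs_deriv_smul measurableSet_Ioo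
      (fun x hx => (hderiv x (Ioo_subset_Icc_self hx)).hasDerivWithinAt) hinj g).mp ?_
    exact hgint.mono_set (himgIoo.trans Ioo_subset_Icc_self)
  have hg2 : IntegrableOn (fun x => (b / D x ^ 2) • g (f x)) (Icc 0 (π/2)) := by
    rw [integrableOn_Icc_iff_integrableOn_Ioo]
    refine key.congr_fun ?_ measurableSet_Ioo
    intro x hx
    simp only
    rw [abs_of_pos (div_pos hb (pow_pos (hD x (Ioo_subset_Icc_self hx)) 2))]
  have hf0 : f 0 = 0 := by simp [hfdef]
  have hf1 : f (π/2) = 1 := by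
    simp [hfdef, hDdef, Real.sin_pi_div_two, Real.cos_pi_div_two, hb.ne']
  have hsub : (∫ θ in (0:ℝ)..(π/2), (b / D θ ^ 2) • g (f θ)) = ∫ x in (0:ℝ)..1, g x := by
    have hsub0 : (∫ θ in (0:ℝ)..(π/2), (b / D θ ^ 2) • (g ∘ f) θ)
        = ∫ x in (f 0)..(f (π/2)), g x := by
      apply intervalIntegral.integral_comp_smul_deriv''' (f := f)
        (f' := fun θ => b / D θ ^ 2) (g := g)
      · rwa [uIcc_of_le hpi.le]
      · intro x hx
        rw [min_eq_left hpi.le, max_eq_right hpi.le] at hx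
        exact (hderiv x (Ioo_subset_Icc_self hx)).hasDerivWithinAt
      · rw [min_eq_left hpi.le, max_eq_right hpi.le]
        exact hgcont.mono himgIoo
      · rw [uIcc_of_le hpi.le]
        exact hgint.mono_set himgIcc
      · rw [uIcc_of_le hpi.le]
        exact hg2
    simp only [Function.comp] at hsub0
    rw [hf0, hf1] at hsub0
    exact hsub0
  have hval : (∫ x in (0:ℝ)..1, g x) = B := by
    simp only [hgdef]
    rw [betaIntegralVal a2 a1 ha2 ha1, hBdef, mul_comm (Real.Gamma a2), add_comm a2]
  have hPG : ∀ x ∈ Ioo (0:ℝ) (π/2), PG a1 a2 b x = B⁻¹ * ((b / D x ^ 2) • g (f x)) := by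
    intro x hx
    have hc : 0 < Real.cos x := Real.cos_pos_of_mem_Ioo ⟨by linarith [hx.1], hx.2⟩
    have hs : 0 < Real.sin x := Real.sin_pos_of_pos_of_lt_pi hx.1 (by linarith [hx.2, Real.pi_pos])
    have hDx : 0 < D x := hD x (Ioo_subset_Icc_self hx)
    have h1 : 1 - f x = Real.cos x / D x := by
      simp only [hfdef, hDdef]
      field_simp
      ring
    have hD2 : D x ^ (a1 + a2) = D x ^ (a1 - 1) * D x ^ (a2 - 1) * D x ^ 2 := by
      rw [← Real.rpow_natCast (D x) 2, ← Real.rpow_add hDx, ← Real.rpow_add hDx]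
      congr 1
      push_cast
      ring
    have hb2 : b ^ a2 = b ^ (a2 - 1) * b := by
      conv_lhs => rw [show a2 = a2 - 1 + 1 by ring]
      rw [Real.rpow_add hb, Real.rpow_one]
    have e1 : (0:ℝ) < Real.cos x ^ (a1 - 1) := Real.rpow_pos_of_pos hc _
    have e2 : (0:ℝ) < Real.sin x ^ (a2 - 1) := Real.rpow_pos_of_pos hs _
    have e3 : (0:ℝ) < b ^ (a2 - 1) := Real.rpow_pos_of_pos hb _
    have e4 : (0:ℝ) < D x ^ (a1 - 1) := Real.rpow_pos_of_pos hDx _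
    have e5 : (0:ℝ) < D x ^ (a2 - 1) := Real.rpow_pos_of_pos hDx _
    simp only [smul_eq_mul, hgdef, h1, PG]
    rw [Real.div_rpow hc.le hDx.le]
    simp only [hfdef]
    rw [Real.div_rpow (by positivity) hDx.le, Real.mul_rpow hb.le hs.le, hD2, hb2, hBdef]
    simp only [hDdef] at e4 e5 hDx ⊢
    field_simp
  have hae : ∫ θ in (0:ℝ)..(π/2), PG a1 a2 b θ
      = ∫ θ in (0:ℝ)..(π/2), B⁻¹ * ((b / D θ ^ 2) • g (f θ)) := by
    apply intervalIntegral.integral_congr_ae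
    have hne : ∀ᵐ x : ℝ, x ≠ π / 2 := by
      rw [ae_iff]
      simp
    filter_upwards [hne] with x hx hxI
    rw [uIoc_of_le hpi.le] at hxI
    exact hPG x ⟨hxI.1, lt_of_le_of_ne hxI.2 hx⟩
  rw [hae, intervalIntegral.integral_const_mul, hsub, hval, inv_mul_cancel₀ hBpos.ne']
end

section
/- If X ~ Gamma(α₁, 1) and Y ~ Gamma(α₂, β) are independent (with β a rate parameter), then the angle θ = arctan(Y/X) has the projected Gamma density PG(θ|α₁,α₂,β) on [0, π/2]. -/
open Real MeasureTheory ProbabilityTheory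
open scoped ENNReal

open Set in
lemma my_prod_withDensity (f g : ℝ → ℝ≥0∞) (hf : Measurable f) (hg : Measurable g) :
    ((volume.withDensity f).prod (volume.withDensity g)) =
      (volume : Measure (ℝ × ℝ)).withDensity (fun p => f p.1 * g p.2) := by
  ext s hs
  have hGm : Measurable (s.indicator (fun p : ℝ × ℝ => g p.2)) :=
    (hg.comp measurable_snd).indicator hs
  have hFm : Measurable (s.indicator (fun p : ℝ × ℝ => f p.1 * g p.2)) :=
    ((hf.comp measurable_fst).mul (hg.comp measurable_snd)).indicator hs
  have hGm2 : Measurable fun x : ℝ => ∫⁻ y, s.indicator (fun p : ℝ × ℝ => g p.2) (x, y) :=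
    Measurable.lintegral_prod_right
      (f := fun x y => s.indicator (fun p : ℝ × ℝ => g p.2) (x, y)) hGm
  rw [Measure.prod_apply hs, withDensity_apply _ hs, ← lintegral_indicator hs]
  have h1 : ∀ x : ℝ, (volume.withDensity g) (Prod.mk x ⁻¹' s)
      = ∫⁻ y, s.indicator (fun p : ℝ × ℝ => g p.2) (x, y) := by
    intro x
    rw [withDensity_apply _ (measurable_prodMk_left hs),
      ← lintegral_indicator (measurable_prodMk_left hs)]
    congr 1
  simp_rw [h1]
  rw [lintegral_withDensity_eq_lintegral_mul _ hf hGm2]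
  rw [Measure.volume_eq_prod, lintegral_prod _ hFm.aemeasurable]
  congr 1
  ext x
  simp only [Pi.mul_apply]
  rw [← lintegral_const_mul (f x)
    (f := fun y => s.indicator (fun p : ℝ × ℝ => g p.2) (x, y))
    (hGm.comp measurable_prodMk_left)]
  congr 1; ext y
  by_cases hxy : (x, y) ∈ s <;> simp [Set.indicator_apply, hxy]

open Set in
theorem my_lintegral_comp_polarCoord_symm (f : ℝ × ℝ → ℝ≥0∞) :
    (∫⁻ p in polarCoord.target, ENNReal.ofReal p.1 * f (polarCoord.symm p))
      = ∫⁻ p, f p := by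
  set B : ℝ × ℝ → ℝ × ℝ →L[ℝ] ℝ × ℝ := fun p =>
    LinearMap.toContinuousLinearMap (Matrix.toLin (Module.Basis.finTwoProd ℝ) (Module.Basis.finTwoProd ℝ)
      !![Real.cos p.2, -p.1 * Real.sin p.2; Real.sin p.2, p.1 * Real.cos p.2])
  have A : ∀ p ∈ polarCoord.target, HasFDerivWithinAt polarCoord.symm (B p)
      polarCoord.target p := fun p _ =>
    (hasFDerivAt_polarCoord_symm p).hasFDerivWithinAt
  have B_det : ∀ p, (B p).det = p.1 := by
    intro p
    conv_rhs => rw [← one_mul p.1, ← cos_sq_add_sin_sq p.2]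
    simp only [B, neg_mul, LinearMap.det_toContinuousLinearMap, LinearMap.det_toLin,
      Matrix.det_fin_two_of, sub_neg_eq_add]
    ring
  symm
  calc
    ∫⁻ p, f p = ∫⁻ p in polarCoord.source, f p := by
      rw [← setLIntegral_univ]
      exact (setLIntegral_congr polarCoord_source_ae_eq_univ.symm)
    _ = ∫⁻ p in polarCoord.target, ENNReal.ofReal |(B p).det| * f (polarCoord.symm p) := by
      rw [← polarCoord.symm_image_target_eq_source]
      exact lintegral_image_eq_lintegral_abs_det_fderiv_mul volume
        polarCoord.open_target.measurableSet A polarCoord.symm.injOn f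
    _ = ∫⁻ p in polarCoord.target, ENNReal.ofReal p.1 * f (polarCoord.symm p) := by
      apply setLIntegral_congr_fun_ae polarCoord.open_target.measurableSet
      filter_upwards with p hp
      rw [B_det, abs_of_pos hp.1]

lemma my_key_alg (a1 a2 b : ℝ) (ha1 : 0 < a1) (ha2 : 0 < a2) (hb : 0 < b)
    {r θ : ℝ} (hr : 0 < r) (hθ1 : 0 < θ) (hθ2 : θ < π / 2) :
    r * (gammaPDFReal a1 1 (r * Real.cos θ) * gammaPDFReal a2 b (r * Real.sin θ))
      = PG a1 a2 b θ * gammaPDFReal (a1 + a2) (Real.cos θ + b * Real.sin θ) r := by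
  have hc : 0 < Real.cos θ := Real.cos_pos_of_mem_Ioo ⟨by linarith [pi_pos], hθ2⟩
  have hs : 0 < Real.sin θ := Real.sin_pos_of_pos_of_lt_pi hθ1 (by linarith [pi_pos])
  have hcs : 0 < Real.cos θ + b * Real.sin θ := by positivity
  have hg1 : 0 < Real.Gamma a1 := Real.Gamma_pos_of_pos ha1
  have hg2 : 0 < Real.Gamma a2 := Real.Gamma_pos_of_pos ha2
  have hg12 : 0 < Real.Gamma (a1 + a2) := Real.Gamma_pos_of_pos (by linarith)
  have hpow : (0:ℝ) < (Real.cos θ + b * Real.sin θ) ^ (a1 + a2) := rpow_pos_of_pos hcs _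
  unfold gammaPDFReal PG
  rw [if_pos (by positivity), if_pos (by positivity), if_pos hr.le]
  rw [Real.mul_rpow hr.le hc.le, Real.mul_rpow hr.le hs.le, Real.one_rpow]
  have hrpow : r * (r ^ (a1-1) * r ^ (a2-1)) = r ^ (a1 + a2 - 1) := by
    rw [show r * (r ^ (a1-1) * r ^ (a2-1)) = r ^ (1:ℝ) * (r ^ (a1-1) * r ^ (a2-1)) by
        rw [Real.rpow_one], ← Real.rpow_add hr, ← Real.rpow_add hr]
    ring_nf
  have hexp : Real.exp (-(1 * (r * Real.cos θ))) * Real.exp (-(b * (r * Real.sin θ)))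
      = Real.exp (-((Real.cos θ + b * Real.sin θ) * r)) := by
    rw [← Real.exp_add]; ring_nf
  field_simp
  rw [show -(r * (Real.cos θ + b * Real.sin θ)) = -(r * Real.cos θ) + -(r * b * Real.sin θ) by ring,
    Real.exp_add]
  linear_combination (Real.exp (-(r * Real.cos θ)) * Real.exp (-(r * b * Real.sin θ))) * hrpow

lemma my_PG_nonneg (a1 a2 b θ : ℝ) (ha1 : 0 < a1) (ha2 : 0 < a2) (hb : 0 < b)
    (hθ1 : 0 < θ) (hθ2 : θ < π / 2) : 0 ≤ PG a1 a2 b θ := by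
  have hc : 0 < Real.cos θ := Real.cos_pos_of_mem_Ioo ⟨by linarith [pi_pos], hθ2⟩
  have hs : 0 < Real.sin θ := Real.sin_pos_of_pos_of_lt_pi hθ1 (by linarith [pi_pos])
  have hcs : 0 < Real.cos θ + b * Real.sin θ := by positivity
  have hg1 : 0 < Real.Gamma a1 := Real.Gamma_pos_of_pos ha1
  have hg2 : 0 < Real.Gamma a2 := Real.Gamma_pos_of_pos ha2
  have hg12 : 0 < Real.Gamma (a1 + a2) := Real.Gamma_pos_of_pos (by linarith)
  unfold PG
  positivity

open Set in
/-- if `X ~ Gamma(α₁, 1)` and `Y ~ Gamma(α₂, β)` are independent (rate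
parametrization), then `θ = arctan (Y / X)` has the projected Gamma density
`PG(θ | α₁, α₂, β)` on `[0, π/2]`. -/
theorem arctan_ratio_gamma_has_PG_density
    {Ω : Type*} [MeasureSpace Ω] (hP : IsProbabilityMeasure (ℙ : Measure Ω))
    (a1 a2 b : ℝ) (ha1 : 0 < a1) (ha2 : 0 < a2) (hb : 0 < b)
    (X Y : Ω → ℝ) (hX : Measurable X) (hY : Measurable Y)
    (hXlaw : Measure.map X ℙ = gammaMeasure a1 1)
    (hYlaw : Measure.map Y ℙ = gammaMeasure a2 b)
    (hindep : IndepFun X Y ℙ) :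
    Measure.map (fun ω => Real.arctan (Y ω / X ω)) ℙ =
      volume.withDensity
        (fun θ => ENNReal.ofReal (Set.indicator (Set.Icc 0 (π / 2)) (PG a1 a2 b) θ)) := by
  have ha12 : 0 < a1 + a2 := by linarith
  -- the angle map on the plane
  set g : ℝ × ℝ → ℝ := fun p => Real.arctan (p.2 / p.1) with hg_def
  have hgm : Measurable g :=
    Real.continuous_arctan.measurable.comp (measurable_snd.div measurable_fst)
  -- joint law
  have hjoint : Measure.map (fun ω => (X ω, Y ω)) ℙ
      = (gammaMeasure a1 1).prod (gammaMeasure a2 b) := by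
    rw [← hXlaw, ← hYlaw]
    exact (indepFun_iff_map_prod_eq_prod_map_map hX.aemeasurable hY.aemeasurable).mp hindep
  have hmap : Measure.map (fun ω => Real.arctan (Y ω / X ω)) ℙ
      = Measure.map g ((gammaMeasure a1 1).prod (gammaMeasure a2 b)) := by
    rw [← hjoint, Measure.map_map hgm (hX.prodMk hY)]
    rfl
  rw [hmap]
  -- joint density
  have hpdf1 : Measurable (gammaPDF a1 1) := (measurable_gammaPDFReal a1 1).ennreal_ofReal
  have hpdf2 : Measurable (gammaPDF a2 b) := (measurable_gammaPDFReal a2 b).ennreal_ofReal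
  have hprod : (gammaMeasure a1 1).prod (gammaMeasure a2 b)
      = (volume : Measure (ℝ × ℝ)).withDensity
          (fun p => gammaPDF a1 1 p.1 * gammaPDF a2 b p.2) := by
    unfold gammaMeasure
    exact my_prod_withDensity _ _ hpdf1 hpdf2
  rw [hprod]
  set F : ℝ × ℝ → ℝ≥0∞ := fun p => gammaPDF a1 1 p.1 * gammaPDF a2 b p.2 with hF_def
  have hFm : Measurable F := (hpdf1.comp measurable_fst).mul (hpdf2.comp measurable_snd)
  -- measurability of PG
  have hPGm : Measurable (fun θ => ENNReal.ofReal (PG a1 a2 b θ)) := by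
    unfold PG; fun_prop
  -- null sets
  have hnull2 : ∀ c : ℝ, volume {p : ℝ × ℝ | p.2 = c} = 0 := by
    intro c
    rw [show {p : ℝ × ℝ | p.2 = c} = (univ : Set ℝ) ×ˢ ({c} : Set ℝ) by
        ext p
        simp only [Set.mem_setOf_eq, Set.mem_prod, Set.mem_univ, Set.mem_singleton_iff, true_and,
          and_true]
        ,
      Measure.volume_eq_prod, Measure.prod_prod]
    simp
  have hnull1 : volume {p : ℝ × ℝ | p.1 = 0} = 0 := by
    rw [show {p : ℝ × ℝ | p.1 = 0} = ({(0:ℝ)} : Set ℝ) ×ˢ (univ : Set ℝ) by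
        ext p
        simp only [Set.mem_setOf_eq, Set.mem_prod, Set.mem_univ, Set.mem_singleton_iff, true_and,
          and_true]
        ,
      Measure.volume_eq_prod, Measure.prod_prod]
    simp
  ext s hs
  rw [Measure.map_apply hgm hs, withDensity_apply _ (hgm hs), withDensity_apply _ hs,
    ← lintegral_indicator (hgm hs), ← my_lintegral_comp_polarCoord_symm]
  -- the integrand in polar coordinates
  set K : ℝ × ℝ → ℝ≥0∞ := fun q =>
    (Ioo 0 (π/2) ∩ s).indicator (fun θ => ENNReal.ofReal (PG a1 a2 b θ)) q.2 *
      gammaPDF (a1 + a2) (Real.cos q.2 + b * Real.sin q.2) q.1 with hK_def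
  have hKm : Measurable K := by
    apply Measurable.mul
    · exact (hPGm.indicator ((measurableSet_Ioo).inter hs)).comp measurable_snd
    · unfold gammaPDF gammaPDFReal
      apply Measurable.ennreal_ofReal
      apply Measurable.ite (measurableSet_le measurable_const measurable_fst)
      · fun_prop
      · exact measurable_const
  have step1 : (∫⁻ p in polarCoord.target,
      ENNReal.ofReal p.1 * ((g ⁻¹' s).indicator F) (polarCoord.symm p)) =
      ∫⁻ p in polarCoord.target, K p := by
    apply setLIntegral_congr_fun_ae polarCoord.open_target.measurableSet
    have h0 : ∀ᵐ p : ℝ × ℝ, p.2 ≠ 0 := by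
      rw [ae_iff]; simpa using hnull2 0
    have h1 : ∀ᵐ p : ℝ × ℝ, p.2 ≠ π / 2 := by
      rw [ae_iff]; simpa using hnull2 (π / 2)
    filter_upwards [h0, h1] with p hp0 hp1 hp
    rw [polarCoord_target] at hp
    obtain ⟨hr, hθ⟩ := hp
    simp only [mem_Ioi] at hr
    simp only [mem_Ioo] at hθ
    set r := p.1
    set θ := p.2
    rw [polarCoord_symm_apply]
    by_cases hθI : θ ∈ Ioo 0 (π/2)
    · obtain ⟨hθ1, hθ2⟩ := hθI
      have hc : 0 < Real.cos θ := Real.cos_pos_of_mem_Ioo ⟨by linarith [pi_pos], hθ2⟩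
      have hsθ : 0 < Real.sin θ := Real.sin_pos_of_pos_of_lt_pi hθ1 (by linarith [pi_pos])
      have harc : g (r * Real.cos θ, r * Real.sin θ) = θ := by
        show Real.arctan (r * Real.sin θ / (r * Real.cos θ)) = θ
        rw [mul_div_mul_left _ _ (ne_of_gt hr), ← Real.tan_eq_sin_div_cos]
        exact Real.arctan_tan (by linarith) hθ2
      by_cases hθs : θ ∈ s
      · have hmem : (r * Real.cos θ, r * Real.sin θ) ∈ g ⁻¹' s := by
          simp only [Set.mem_preimage, harc]; exact hθs
        rw [Set.indicator_of_mem hmem]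
        rw [hK_def]
        simp only
        rw [Set.indicator_of_mem (Set.mem_inter (Set.mem_Ioo.mpr ⟨hθ1, hθ2⟩) hθs)]
        show ENNReal.ofReal r * (gammaPDF a1 1 (r * Real.cos θ) * gammaPDF a2 b (r * Real.sin θ))
          = ENNReal.ofReal (PG a1 a2 b θ) * gammaPDF (a1+a2) (Real.cos θ + b * Real.sin θ) r
        unfold gammaPDF
        rw [← ENNReal.ofReal_mul (gammaPDFReal_nonneg ha1 one_pos _),
          ← ENNReal.ofReal_mul hr.le,
          ← ENNReal.ofReal_mul (my_PG_nonneg a1 a2 b θ ha1 ha2 hb hθ1 hθ2)]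
        exact congrArg ENNReal.ofReal (my_key_alg a1 a2 b ha1 ha2 hb hr hθ1 hθ2)
      · have hmem : (r * Real.cos θ, r * Real.sin θ) ∉ g ⁻¹' s := by
          simp only [Set.mem_preimage, harc]; exact hθs
        rw [Set.indicator_of_notMem hmem, hK_def]
        simp only
        rw [Set.indicator_of_notMem (fun h : θ ∈ Set.Ioo 0 (π/2) ∩ s => hθs h.2)]
        simp
    · -- θ outside (0, π/2): both sides vanish
      rw [hK_def]
      simp only
      rw [Set.indicator_of_notMem (fun h : θ ∈ Set.Ioo 0 (π/2) ∩ s => hθI h.1), zero_mul]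
      -- show left side is zero: F vanishes
      have hF0 : F (r * Real.cos θ, r * Real.sin θ) = 0 := by
        rw [hF_def]
        simp only
        rcases lt_or_gt_of_ne hp0 with hneg | hpos
        · -- θ < 0, sin θ < 0
          have : Real.sin θ < 0 := Real.sin_neg_of_neg_of_neg_pi_lt hneg hθ.1
          rw [gammaPDF_of_neg (mul_neg_of_pos_of_neg hr this), mul_zero]
        · -- θ > 0, so θ > π/2 (since not in Ioo and ≠ π/2), cos θ < 0
          have hθgt : π / 2 < θ := by
            rcases lt_trichotomy θ (π/2) with h | h | h
            · exact absurd ⟨hpos, h⟩ hθI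
            · exact absurd h hp1
            · exact h
          have : Real.cos θ < 0 := by
            apply Real.cos_neg_of_pi_div_two_lt_of_lt hθgt
            linarith [pi_pos, hθ.2]
          rw [gammaPDF_of_neg (mul_neg_of_pos_of_neg hr this), zero_mul]
      rcases Set.indicator_eq_zero_or_self (g ⁻¹' s) F (r * Real.cos θ, r * Real.sin θ) with h | h
      · rw [h, mul_zero]
      · rw [h, hF0, mul_zero]
  rw [step1]
  -- extend the polar integral to all of ℝ²
  have step2 : (∫⁻ p in polarCoord.target, K p) = ∫⁻ p, K p := by
    have hzero : (∫⁻ p in polarCoord.targetᶜ, K p) = 0 := by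
      rw [lintegral_eq_zero_iff hKm]
      have h1 : ∀ᵐ p : ℝ × ℝ, p.1 ≠ 0 := by
        rw [ae_iff]; simpa using hnull1
      rw [Filter.EventuallyEq, ae_restrict_iff' polarCoord.open_target.measurableSet.compl]
      filter_upwards [h1] with p hp1 hpc
      rw [hK_def]
      simp only [Pi.zero_apply]
      by_cases hθI : p.2 ∈ Ioo 0 (π/2) ∩ s
      · -- then p.1 ≤ 0, in fact < 0
        have hpt : p ∉ polarCoord.target := by
          rwa [← Set.mem_compl_iff]
        rw [polarCoord_target] at hpt
        have hr0 : p.1 < 0 := by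
          by_contra hcon
          push_neg at hcon
          apply hpt
          constructor
          · simp only [Set.mem_Ioi]
            rcases lt_or_eq_of_le hcon with h | h
            · exact h
            · exact absurd h.symm hp1
          · obtain ⟨⟨h1', h2'⟩, _⟩ := hθI
            exact ⟨by linarith [pi_pos], by linarith [pi_pos]⟩
        rw [gammaPDF_of_neg hr0, mul_zero]
      · rw [Set.indicator_of_notMem hθI, zero_mul]
    conv_rhs => rw [← lintegral_add_compl K polarCoord.open_target.measurableSet]
    rw [hzero, add_zero]
  rw [step2]
  -- Tonelli + the radial gamma integral
  have step3 : (∫⁻ p, K p) = ∫⁻ θ,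
      (Ioo 0 (π/2) ∩ s).indicator (fun θ => ENNReal.ofReal (PG a1 a2 b θ)) θ := by
    rw [Measure.volume_eq_prod, lintegral_prod_symm K
      (by rw [← Measure.volume_eq_prod]; exact hKm.aemeasurable)]
    congr 1
    ext θ
    rw [hK_def]
    simp only
    rw [lintegral_const_mul _ (by
      unfold gammaPDF gammaPDFReal
      apply Measurable.ennreal_ofReal
      apply Measurable.ite measurableSet_Ici <;> fun_prop)]
    by_cases hθI : θ ∈ Ioo 0 (π/2) ∩ s
    · obtain ⟨⟨hθ1, hθ2⟩, _⟩ := hθI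
      have hc : 0 < Real.cos θ := Real.cos_pos_of_mem_Ioo ⟨by linarith [pi_pos], hθ2⟩
      have hsθ : 0 < Real.sin θ := Real.sin_pos_of_pos_of_lt_pi hθ1 (by linarith [pi_pos])
      rw [lintegral_gammaPDF_eq_one ha12 (by positivity), mul_one]
    · rw [Set.indicator_of_notMem hθI, zero_mul]
  rw [step3]
  -- identify with the Icc indicator density
  rw [← lintegral_indicator hs]
  apply lintegral_congr_ae
  have h0 : ∀ᵐ θ : ℝ, θ ≠ 0 := by
    rw [ae_iff]; simpa using (volume_singleton (a := (0:ℝ)))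
  have h1 : ∀ᵐ θ : ℝ, θ ≠ π / 2 := by
    rw [ae_iff]; simpa using (volume_singleton (a := (π/2:ℝ)))
  filter_upwards [h0, h1] with θ hθ0 hθ1
  by_cases hθs : θ ∈ s
  · rw [Set.indicator_of_mem hθs]
    by_cases hθI : θ ∈ Ioo 0 (π/2)
    · rw [Set.indicator_of_mem (Set.mem_inter hθI hθs),
        Set.indicator_of_mem (Set.mem_Icc.mpr ⟨hθI.1.le, hθI.2.le⟩)]
    · have hIcc : θ ∉ Set.Icc 0 (π/2) := by
        intro h
        apply hθI
        rcases lt_or_eq_of_le h.1 with h' | h'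
        · rcases lt_or_eq_of_le h.2 with h'' | h''
          · exact ⟨h', h''⟩
          · exact absurd h'' hθ1
        · exact absurd h'.symm hθ0
      rw [Set.indicator_of_notMem (fun h : θ ∈ Set.Ioo 0 (π/2) ∩ s => hθI h.1),
        Set.indicator_of_notMem hIcc]
      simp
  · rw [Set.indicator_of_notMem hθs,
      Set.indicator_of_notMem (fun h : θ ∈ Set.Ioo 0 (π/2) ∩ s => hθs h.2)]
end

section
/- Sklar's theorem (bivariate case): if H is a bivariate distribution function with continuous marginals F₁ and F₂, then there exists a unique copula C such that H(x,y) = C(F₁(x), F₂(y)) for all x, y ∈ ℝ. -/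
open Real Filter Topology

/-- A bivariate copula: `C(u,0) = C(0,v) = 0`, `C(u,1) = u`, `C(1,v) = v`, and
2-increasingness on `[0,1]²`. -/
def IsCopula2 (C : ℝ → ℝ → ℝ) : Prop :=
  (∀ u ∈ Set.Icc (0:ℝ) 1, C u 0 = 0 ∧ C 0 u = 0 ∧ C u 1 = u ∧ C 1 u = u) ∧
  (∀ a₁ b₁ a₂ b₂ : ℝ, a₁ ∈ Set.Icc (0:ℝ) 1 → b₁ ∈ Set.Icc (0:ℝ) 1 →
    a₂ ∈ Set.Icc (0:ℝ) 1 → b₂ ∈ Set.Icc (0:ℝ) 1 → a₁ ≤ b₁ → a₂ ≤ b₂ →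
      0 ≤ C b₁ b₂ - C a₁ b₂ - C b₁ a₂ + C a₁ a₂)

/-- Sklar's theorem, bivariate case: if `H` is a bivariate distribution
function (2-increasing, right-continuous, with the appropriate limits) whose marginals
`F₁(x) = lim_{y→∞} H(x,y)` and `F₂(y) = lim_{x→∞} H(x,y)` are continuous, then there is a
copula `C`, unique on `[0,1]²`, with `H(x,y) = C(F₁(x), F₂(y))` for all `x, y`. -/
theorem sklar_bivariate (H : ℝ → ℝ → ℝ) (F1 F2 : ℝ → ℝ)
    (hincr : ∀ a₁ b₁ a₂ b₂ : ℝ, a₁ ≤ b₁ → a₂ ≤ b₂ →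
      0 ≤ H b₁ b₂ - H a₁ b₂ - H b₁ a₂ + H a₁ a₂)
    (hrc : ∀ p : ℝ × ℝ, ContinuousWithinAt (fun q : ℝ × ℝ => H q.1 q.2)
      (Set.Ici p) p)
    (hF1 : ∀ x, Tendsto (fun y => H x y) atTop (nhds (F1 x)))
    (hF2 : ∀ y, Tendsto (fun x => H x y) atTop (nhds (F2 y)))
    (hbot1 : ∀ y, Tendsto (fun x => H x y) atBot (nhds 0))
    (hbot2 : ∀ x, Tendsto (fun y => H x y) atBot (nhds 0))
    (htop : Tendsto (fun t : ℝ => H t t) atTop (nhds 1))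
    (hF1cont : Continuous F1) (hF2cont : Continuous F2) :
    ∃ C : ℝ → ℝ → ℝ, IsCopula2 C ∧ (∀ x y, H x y = C (F1 x) (F2 y)) ∧
      ∀ C' : ℝ → ℝ → ℝ, IsCopula2 C' → (∀ x y, H x y = C' (F1 x) (F2 y)) →
        ∀ u ∈ Set.Icc (0:ℝ) 1, ∀ v ∈ Set.Icc (0:ℝ) 1, C' u v = C u v := by
  classical
  have mono1 : ∀ x x' y : ℝ, x ≤ x' → H x y ≤ H x' y := by
    intro x x' y hx
    have hT : Tendsto (fun b => H x' y - H x y - H x' b + H x b) atBot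
        (nhds (H x' y - H x y - 0 + 0)) :=
      (tendsto_const_nhds.sub (hbot2 x')).add (hbot2 x)
    have h0 : (0:ℝ) ≤ H x' y - H x y - 0 + 0 :=
      ge_of_tendsto hT (eventually_atBot.2 ⟨y, fun b hb => by
        have := hincr x x' b y hx hb; linarith⟩)
    linarith
  have mono2 : ∀ x y y' : ℝ, y ≤ y' → H x y ≤ H x y' := by
    intro x y y' hy
    have hT : Tendsto (fun a => H x y' - H x y - H a y' + H a y) atBot
        (nhds (H x y' - H x y - 0 + 0)) :=
      (tendsto_const_nhds.sub (hbot1 y')).add (hbot1 y)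
    have h0 : (0:ℝ) ≤ H x y' - H x y - 0 + 0 :=
      ge_of_tendsto hT (eventually_atBot.2 ⟨x, fun a ha => by
        have := hincr a x y y' ha hy; linarith⟩)
    linarith
  have nonneg : ∀ x y, 0 ≤ H x y := fun x y =>
    le_of_tendsto (hbot1 y) (eventually_atBot.2 ⟨x, fun a ha => mono1 a x y ha⟩)
  have hle1 : ∀ x y, H x y ≤ F1 x := fun x y =>
    ge_of_tendsto (hF1 x) (eventually_atTop.2 ⟨y, fun b hb => mono2 x y b hb⟩)
  have hle2 : ∀ x y, H x y ≤ F2 y := fun x y =>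
    ge_of_tendsto (hF2 y) (eventually_atTop.2 ⟨x, fun a ha => mono1 x a y ha⟩)
  have lip1 : ∀ x x' y : ℝ, x ≤ x' → H x' y - H x y ≤ F1 x' - F1 x := by
    intro x x' y hx
    have hT : Tendsto (fun b => H x' b - H x b - H x' y + H x y) atTop
        (nhds (F1 x' - F1 x - H x' y + H x y)) :=
      (((hF1 x').sub (hF1 x)).sub tendsto_const_nhds).add tendsto_const_nhds
    have h0 : (0:ℝ) ≤ F1 x' - F1 x - H x' y + H x y :=
      ge_of_tendsto hT (eventually_atTop.2 ⟨y, fun b hb => by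
        have := hincr x x' y b hx hb; linarith⟩)
    linarith
  have lip2 : ∀ x y y' : ℝ, y ≤ y' → H x y' - H x y ≤ F2 y' - F2 y := by
    intro x y y' hy
    have hT : Tendsto (fun a => H a y' - H a y - H x y' + H x y) atTop
        (nhds (F2 y' - F2 y - H x y' + H x y)) :=
      (((hF2 y').sub (hF2 y)).sub tendsto_const_nhds).add tendsto_const_nhds
    have h0 : (0:ℝ) ≤ F2 y' - F2 y - H x y' + H x y :=
      ge_of_tendsto hT (eventually_atTop.2 ⟨x, fun a ha => by
        have := hincr x a y y' ha hy; linarith⟩)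
    linarith
  have F1mono : ∀ x x' : ℝ, x ≤ x' → F1 x ≤ F1 x' := fun x x' h => by
    have h1 := lip1 x x' 0 h; have h2 := mono1 x x' 0 h; linarith
  have F2mono : ∀ y y' : ℝ, y ≤ y' → F2 y ≤ F2 y' := fun y y' h => by
    have h1 := lip2 0 y y' h; have h2 := mono2 0 y y' h; linarith
  have diagle1 : ∀ s : ℝ, H s s ≤ 1 := fun s =>
    ge_of_tendsto htop (eventually_atTop.2 ⟨s, fun t ht =>
      le_trans (mono1 s t s ht) (mono2 t s t ht)⟩)
  have Hle1 : ∀ x y, H x y ≤ 1 := fun x y =>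
    le_trans (le_trans (mono1 x (max x y) y (le_max_left _ _))
      (mono2 (max x y) y (max x y) (le_max_right _ _))) (diagle1 _)
  have F1le1 : ∀ x, F1 x ≤ 1 := fun x =>
    le_of_tendsto (hF1 x) (Eventually.of_forall fun y => Hle1 x y)
  have F2le1 : ∀ y, F2 y ≤ 1 := fun y =>
    le_of_tendsto (hF2 y) (Eventually.of_forall fun x => Hle1 x y)
  have F1top : Tendsto F1 atTop (nhds 1) :=
    tendsto_of_tendsto_of_tendsto_of_le_of_le htop tendsto_const_nhds
      (fun t => hle1 t t) F1le1
  have F2top : Tendsto F2 atTop (nhds 1) :=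
    tendsto_of_tendsto_of_tendsto_of_le_of_le htop tendsto_const_nhds
      (fun t => hle2 t t) F2le1
  have frechet : ∀ x y, F1 x + F2 y - 1 ≤ H x y := by
    intro x y
    have hT : Tendsto (fun t => F1 t - F1 x - H t y + H x y) atTop
        (nhds (1 - F1 x - F2 y + H x y)) :=
      ((F1top.sub tendsto_const_nhds).sub (hF2 y)).add tendsto_const_nhds
    have h0 : (0:ℝ) ≤ 1 - F1 x - F2 y + H x y :=
      ge_of_tendsto hT (eventually_atTop.2 ⟨x, fun t ht => by
        have := lip1 x t y ht; linarith⟩)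
    linarith
  have surj1 : ∀ u : ℝ, ∃ x, 0 < u → u < 1 → F1 x = u := by
    intro u
    by_cases hu : 0 < u ∧ u < 1
    · obtain ⟨hu0, hu1⟩ := hu
      obtain ⟨b, hb⟩ := (F1top.eventually (eventually_gt_nhds hu1)).exists
      obtain ⟨t, ht⟩ := (htop.eventually (eventually_gt_nhds
        (by linarith : 1 - u/2 < 1))).exists
      obtain ⟨a, ha1, ha2⟩ := (((hbot1 t).eventually (eventually_lt_nhds
        (by linarith : (0:ℝ) < u/2))).and (eventually_le_atBot t)).exists
      have hFa : F1 a < u := by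
        have h3 := lip1 a t t ha2
        have h4 := F1le1 t
        linarith
      have hab : a ≤ b := by
        by_contra hc
        have := F1mono b a (le_of_not_ge hc)
        linarith
      obtain ⟨x, _, hx⟩ := intermediate_value_Icc hab hF1cont.continuousOn
        ⟨le_of_lt hFa, le_of_lt hb⟩
      exact ⟨x, fun _ _ => hx⟩
    · exact ⟨0, fun h1 h2 => absurd ⟨h1, h2⟩ hu⟩
  have surj2 : ∀ v : ℝ, ∃ y, 0 < v → v < 1 → F2 y = v := by
    intro v
    by_cases hv : 0 < v ∧ v < 1
    · obtain ⟨hv0, hv1⟩ := hv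
      obtain ⟨b, hb⟩ := (F2top.eventually (eventually_gt_nhds hv1)).exists
      obtain ⟨t, ht⟩ := (htop.eventually (eventually_gt_nhds
        (by linarith : 1 - v/2 < 1))).exists
      obtain ⟨a, ha1, ha2⟩ := (((hbot2 t).eventually (eventually_lt_nhds
        (by linarith : (0:ℝ) < v/2))).and (eventually_le_atBot t)).exists
      have hFa : F2 a < v := by
        have h3 := lip2 t a t ha2
        have h4 := F2le1 t
        linarith
      have hab : a ≤ b := by
        by_contra hc
        have := F2mono b a (le_of_not_ge hc)
        linarith
      obtain ⟨y, _, hy⟩ := intermediate_value_Icc hab hF2cont.continuousOn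
        ⟨le_of_lt hFa, le_of_lt hb⟩
      exact ⟨y, fun _ _ => hy⟩
    · exact ⟨0, fun h1 h2 => absurd ⟨h1, h2⟩ hv⟩
  choose g1 hg1 using surj1
  choose g2 hg2 using surj2
  have hconst1 : ∀ x x' y : ℝ, F1 x = F1 x' → H x y = H x' y := by
    intro x x' y he
    rcases le_total x x' with h|h
    · have h1 := mono1 x x' y h; have h2 := lip1 x x' y h; linarith
    · have h1 := mono1 x' x y h; have h2 := lip1 x' x y h; linarith
  have hconst2 : ∀ x y y' : ℝ, F2 y = F2 y' → H x y = H x y' := by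
    intro x y y' he
    rcases le_total y y' with h|h
    · have h1 := mono2 x y y' h; have h2 := lip2 x y y' h; linarith
    · have h1 := mono2 x y' y h; have h2 := lip2 x y' y h; linarith
  have mono1F : ∀ x x' y : ℝ, F1 x ≤ F1 x' → H x y ≤ H x' y := by
    intro x x' y h
    rcases le_total x x' with hh|hh
    · exact mono1 x x' y hh
    · exact le_of_eq (hconst1 x x' y (le_antisymm h (F1mono x' x hh)))
  have mono2F : ∀ x y y' : ℝ, F2 y ≤ F2 y' → H x y ≤ H x y' := by
    intro x y y' h
    rcases le_total y y' with hh|hh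
    · exact mono2 x y y' hh
    · exact le_of_eq (hconst2 x y y' (le_antisymm h (F2mono y' y hh)))
  have lip1F : ∀ x x' y : ℝ, F1 x ≤ F1 x' → H x' y - H x y ≤ F1 x' - F1 x := by
    intro x x' y h
    rcases le_total x x' with hh|hh
    · exact lip1 x x' y hh
    · have e := hconst1 x x' y (le_antisymm h (F1mono x' x hh)); linarith
  have lip2F : ∀ x y y' : ℝ, F2 y ≤ F2 y' → H x y' - H x y ≤ F2 y' - F2 y := by
    intro x y y' h
    rcases le_total y y' with hh|hh
    · exact lip2 x y y' hh
    · have e := hconst2 x y y' (le_antisymm h (F2mono y' y hh)); linarith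
  have hincrF : ∀ x x' y y' : ℝ, F1 x ≤ F1 x' → F2 y ≤ F2 y' →
      0 ≤ H x' y' - H x y' - H x' y + H x y := by
    intro x x' y y' h1 h2
    rcases le_total x x' with hx|hx
    · rcases le_total y y' with hy|hy
      · exact hincr x x' y y' hx hy
      · have e2 : F2 y = F2 y' := le_antisymm h2 (F2mono y' y hy)
        have a := hconst2 x y y' e2
        have b := hconst2 x' y y' e2
        linarith
    · have e1 : F1 x = F1 x' := le_antisymm h1 (F1mono x' x hx)
      have a := hconst1 x x' y e1
      have b := hconst1 x x' y' e1
      linarith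
  -- the copula
  set C : ℝ → ℝ → ℝ := fun u v =>
    if u ≤ 0 ∨ v ≤ 0 then 0 else if 1 ≤ u then min v 1 else if 1 ≤ v then u
    else H (g1 u) (g2 v) with hCdef
  have Cv0 : ∀ u, C u 0 = 0 := by intro u; simp [hCdef]
  have C0v : ∀ v, C 0 v = 0 := by intro v; simp [hCdef]
  have Cu1 : ∀ u, 0 ≤ u → u ≤ 1 → C u 1 = u := by
    intro u h0 h1
    simp only [hCdef]
    split_ifs with h h2 h3
    · rcases h with h|h
      · linarith
      · linarith
    · rw [min_self]; linarith
    · rfl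
    · exact absurd le_rfl h3
  have C1v : ∀ v, 0 ≤ v → v ≤ 1 → C 1 v = v := by
    intro v h0 h1
    simp only [hCdef]
    split_ifs with h h2 h3
    · rcases h with h|h
      · linarith
      · linarith
    · exact min_eq_left h1
    · exact absurd le_rfl h2
    · exact absurd le_rfl h2
  have Cint : ∀ u v, 0 < u → u < 1 → 0 < v → v < 1 → C u v = H (g1 u) (g2 v) := by
    intro u v h0 h1 h2 h3
    simp only [hCdef]
    rw [if_neg (by push_neg; exact ⟨h0, h2⟩), if_neg (not_le.mpr h1),
      if_neg (not_le.mpr h3)]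
  have hrepr : ∀ x y, H x y = C (F1 x) (F2 y) := by
    intro x y
    rcases le_or_gt (F1 x) 0 with h1|h1
    · have e : C (F1 x) (F2 y) = 0 := by
        simp only [hCdef]; rw [if_pos (Or.inl h1)]
      rw [e]
      exact le_antisymm (le_trans (hle1 x y) h1) (nonneg x y)
    rcases le_or_gt (F2 y) 0 with h2|h2
    · have e : C (F1 x) (F2 y) = 0 := by
        simp only [hCdef]; rw [if_pos (Or.inr h2)]
      rw [e]
      exact le_antisymm (le_trans (hle2 x y) h2) (nonneg x y)
    rcases le_or_gt 1 (F1 x) with h3|h3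
    · have e : C (F1 x) (F2 y) = F2 y := by
        simp only [hCdef]
        rw [if_neg (by push_neg; exact ⟨h1, h2⟩), if_pos h3]
        exact min_eq_left (F2le1 y)
      rw [e]
      have hf := frechet x y
      have hl := hle2 x y
      linarith
    rcases le_or_gt 1 (F2 y) with h4|h4
    · have e : C (F1 x) (F2 y) = F1 x := by
        simp only [hCdef]
        rw [if_neg (by push_neg; exact ⟨h1, h2⟩), if_neg (not_le.mpr h3),
          if_pos h4]
      rw [e]
      have hf := frechet x y
      have hl := hle1 x y
      linarith
    · rw [Cint (F1 x) (F2 y) h1 h3 h2 h4]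
      have e1 := hg1 (F1 x) h1 h3
      have e2 := hg2 (F2 y) h2 h4
      calc H x y = H (g1 (F1 x)) y := hconst1 x _ y e1.symm
        _ = H (g1 (F1 x)) (g2 (F2 y)) := hconst2 _ y _ e2.symm
  have hcop : IsCopula2 C := by
    constructor
    · intro u hu
      exact ⟨Cv0 u, C0v u, Cu1 u hu.1 hu.2, C1v u hu.1 hu.2⟩
    · intro a₁ b₁ a₂ b₂ ha₁ hb₁ ha₂ hb₂ hab1 hab2
      rcases hab1.eq_or_lt with rfl|h1
      · linarith
      rcases hab2.eq_or_lt with rfl|h2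
      · linarith
      have hb₁pos : 0 < b₁ := lt_of_le_of_lt ha₁.1 h1
      have ha₁lt1 : a₁ < 1 := lt_of_lt_of_le h1 hb₁.2
      have hb₂pos : 0 < b₂ := lt_of_le_of_lt ha₂.1 h2
      have ha₂lt1 : a₂ < 1 := lt_of_lt_of_le h2 hb₂.2
      rcases ha₁.1.eq_or_lt with rfl|ha₁pos
      · -- a₁ = 0
        rcases hb₁.2.eq_or_lt with rfl|hb₁lt
        · -- a₁ = 0, b₁ = 1
          rcases ha₂.1.eq_or_lt with rfl|ha₂pos
          · rcases hb₂.2.eq_or_lt with rfl|hb₂lt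
            · rw [C1v 1 zero_le_one le_rfl, C0v, Cv0, C0v]; linarith
            · rw [C1v b₂ hb₂pos.le hb₂lt.le, C0v, Cv0, C0v]; linarith
          · rcases hb₂.2.eq_or_lt with rfl|hb₂lt
            · rw [C1v 1 zero_le_one le_rfl, C0v, C1v a₂ ha₂pos.le ha₂lt1.le,
                C0v]; linarith
            · rw [C1v b₂ hb₂pos.le hb₂lt.le, C0v, C1v a₂ ha₂pos.le ha₂lt1.le,
                C0v]; linarith
        · -- a₁ = 0, 0 < b₁ < 1
          rcases ha₂.1.eq_or_lt with rfl|ha₂pos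
          · rcases hb₂.2.eq_or_lt with rfl|hb₂lt
            · rw [Cu1 b₁ hb₁pos.le hb₁lt.le, C0v, Cv0, C0v]; linarith
            · rw [Cint b₁ b₂ hb₁pos hb₁lt hb₂pos hb₂lt, C0v, Cv0, C0v]
              have := nonneg (g1 b₁) (g2 b₂); linarith
          · rcases hb₂.2.eq_or_lt with rfl|hb₂lt
            · rw [Cu1 b₁ hb₁pos.le hb₁lt.le, C0v,
                Cint b₁ a₂ hb₁pos hb₁lt ha₂pos ha₂lt1, C0v]
              have h5 := hle1 (g1 b₁) (g2 a₂)
              rw [hg1 b₁ hb₁pos hb₁lt] at h5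
              linarith
            · rw [Cint b₁ b₂ hb₁pos hb₁lt hb₂pos hb₂lt, C0v,
                Cint b₁ a₂ hb₁pos hb₁lt ha₂pos ha₂lt1, C0v]
              have h5 := mono2F (g1 b₁) (g2 a₂) (g2 b₂) (by
                rw [hg2 a₂ ha₂pos ha₂lt1, hg2 b₂ hb₂pos hb₂lt]; exact h2.le)
              linarith
      · -- 0 < a₁
        rcases hb₁.2.eq_or_lt with rfl|hb₁lt
        · -- 0 < a₁ < 1, b₁ = 1
          rcases ha₂.1.eq_or_lt with rfl|ha₂pos
          · rcases hb₂.2.eq_or_lt with rfl|hb₂lt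
            · rw [C1v 1 zero_le_one le_rfl, Cu1 a₁ ha₁pos.le ha₁lt1.le, Cv0,
                Cv0]; linarith
            · rw [C1v b₂ hb₂pos.le hb₂lt.le,
                Cint a₁ b₂ ha₁pos ha₁lt1 hb₂pos hb₂lt, Cv0, Cv0]
              have h5 := hle2 (g1 a₁) (g2 b₂)
              rw [hg2 b₂ hb₂pos hb₂lt] at h5
              linarith
          · rcases hb₂.2.eq_or_lt with rfl|hb₂lt
            · rw [C1v 1 zero_le_one le_rfl, Cu1 a₁ ha₁pos.le ha₁lt1.le,
                C1v a₂ ha₂pos.le ha₂lt1.le,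
                Cint a₁ a₂ ha₁pos ha₁lt1 ha₂pos ha₂lt1]
              have h5 := frechet (g1 a₁) (g2 a₂)
              rw [hg1 a₁ ha₁pos ha₁lt1, hg2 a₂ ha₂pos ha₂lt1] at h5
              linarith
            · rw [C1v b₂ hb₂pos.le hb₂lt.le,
                Cint a₁ b₂ ha₁pos ha₁lt1 hb₂pos hb₂lt,
                C1v a₂ ha₂pos.le ha₂lt1.le,
                Cint a₁ a₂ ha₁pos ha₁lt1 ha₂pos ha₂lt1]
              have h5 := lip2F (g1 a₁) (g2 a₂) (g2 b₂) (by
                rw [hg2 a₂ ha₂pos ha₂lt1, hg2 b₂ hb₂pos hb₂lt]; exact h2.le)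
              rw [hg2 a₂ ha₂pos ha₂lt1, hg2 b₂ hb₂pos hb₂lt] at h5
              linarith
        · -- 0 < a₁ < b₁ < 1
          rcases ha₂.1.eq_or_lt with rfl|ha₂pos
          · rcases hb₂.2.eq_or_lt with rfl|hb₂lt
            · rw [Cu1 b₁ hb₁pos.le hb₁lt.le, Cu1 a₁ ha₁pos.le ha₁lt1.le, Cv0,
                Cv0]; linarith
            · rw [Cint b₁ b₂ hb₁pos hb₁lt hb₂pos hb₂lt,
                Cint a₁ b₂ ha₁pos ha₁lt1 hb₂pos hb₂lt, Cv0, Cv0]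
              have h5 := mono1F (g1 a₁) (g1 b₁) (g2 b₂) (by
                rw [hg1 a₁ ha₁pos ha₁lt1, hg1 b₁ hb₁pos hb₁lt]; exact h1.le)
              linarith
          · rcases hb₂.2.eq_or_lt with rfl|hb₂lt
            · rw [Cu1 b₁ hb₁pos.le hb₁lt.le, Cu1 a₁ ha₁pos.le ha₁lt1.le,
                Cint b₁ a₂ hb₁pos hb₁lt ha₂pos ha₂lt1,
                Cint a₁ a₂ ha₁pos ha₁lt1 ha₂pos ha₂lt1]
              have h5 := lip1F (g1 a₁) (g1 b₁) (g2 a₂) (by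
                rw [hg1 a₁ ha₁pos ha₁lt1, hg1 b₁ hb₁pos hb₁lt]; exact h1.le)
              rw [hg1 a₁ ha₁pos ha₁lt1, hg1 b₁ hb₁pos hb₁lt] at h5
              linarith
            · rw [Cint b₁ b₂ hb₁pos hb₁lt hb₂pos hb₂lt,
                Cint a₁ b₂ ha₁pos ha₁lt1 hb₂pos hb₂lt,
                Cint b₁ a₂ hb₁pos hb₁lt ha₂pos ha₂lt1,
                Cint a₁ a₂ ha₁pos ha₁lt1 ha₂pos ha₂lt1]
              have h5 := hincrF (g1 a₁) (g1 b₁) (g2 a₂) (g2 b₂)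
                (by rw [hg1 a₁ ha₁pos ha₁lt1, hg1 b₁ hb₁pos hb₁lt]; exact h1.le)
                (by rw [hg2 a₂ ha₂pos ha₂lt1, hg2 b₂ hb₂pos hb₂lt]; exact h2.le)
              linarith
  refine ⟨C, hcop, hrepr, ?_⟩
  intro C' hC' hrep' u hu v hv
  rcases hu.1.eq_or_lt with rfl|hu0
  · rw [(hC'.1 v hv).2.1, C0v]
  rcases hu.2.eq_or_lt with rfl|hu1
  · rw [(hC'.1 v hv).2.2.2, C1v v hv.1 hv.2]
  rcases hv.1.eq_or_lt with rfl|hv0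
  · rw [(hC'.1 u hu).1, Cv0]
  rcases hv.2.eq_or_lt with rfl|hv1
  · rw [(hC'.1 u hu).2.2.1, Cu1 u hu.1 hu.2]
  · have e1 := hg1 u hu0 hu1
    have e2 := hg2 v hv0 hv1
    have h := hrep' (g1 u) (g2 v)
    rw [e1, e2] at h
    rw [← h, Cint u v hu0 hu1 hv0 hv1]
end

section
/- The Wehrly–Johnson construction yields a valid bivariate density: if f₁, f₂ are probability densities on [0, 2π) with cdfs F₁, F₂, and g is a probability density on [0, 2π) extended periodically with period 2π, then f(θ₁,θ₂) = 2π · g(2π(F₁(θ₁) - F₂(θ₂))) f₁(θ₁) f₂(θ₂) integrates to 1 over [0,2π)², and its marginal densities are f₁ and f₂. -/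
open Real MeasureTheory intervalIntegral

lemma wj_push (f F : ℝ → ℝ) (hfm : Measurable f) (hf : ∀ x, 0 ≤ f x)
    (hfint : (∫ x in (0:ℝ)..(2 * π), f x) = 1)
    (hF : ∀ θ, F θ = ∫ t in (0:ℝ)..θ, f t) (hFc : Continuous F) :
    Measure.map F ((volume.restrict (Set.Ioc 0 (2 * π))).withDensity
        (fun θ => ENNReal.ofReal (f θ)))
      = volume.restrict (Set.Ioc (0:ℝ) 1) := by
  have hπ : (0:ℝ) < 2 * π := by positivity
  set ν := (volume.restrict (Set.Ioc 0 (2 * π))).withDensity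
      (fun θ => ENNReal.ofReal (f θ)) with hν
  have hint : IntegrableOn f (Set.Ioc 0 (2 * π)) := by
    by_contra h
    rw [intervalIntegral.integral_of_le hπ.le, MeasureTheory.integral_undef h] at hfint
    exact one_ne_zero hfint.symm
  have hii : ∀ s : ℝ, 0 ≤ s → s ≤ 2 * π → IntervalIntegrable f volume 0 s := by
    intro s hs hs2
    rw [intervalIntegrable_iff_integrableOn_Ioc_of_le hs]
    exact hint.mono_set (Set.Ioc_subset_Ioc le_rfl hs2)
  have hF0 : F 0 = 0 := by rw [hF]; simp
  have hF2π : F (2 * π) = 1 := by rw [hF]; exact hfint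
  have hmono : MonotoneOn F (Set.Icc 0 (2 * π)) := by
    intro a ha b hb hab
    have hiab : IntervalIntegrable f volume a b := by
      rw [intervalIntegrable_iff_integrableOn_Ioc_of_le hab]
      exact hint.mono_set (Set.Ioc_subset_Ioc ha.1 hb.2)
    have hsum : F a + ∫ x in a..b, f x = F b := by
      rw [hF, hF]
      exact intervalIntegral.integral_add_adjacent_intervals (hii a ha.1 ha.2) hiab
    have hnn : (0:ℝ) ≤ ∫ x in a..b, f x := intervalIntegral.integral_nonneg hab (fun x _ => hf x)
    linarith
  -- measure of Ioc 0 s under ν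
  have hνIoc : ∀ s : ℝ, 0 ≤ s → s ≤ 2 * π → ν (Set.Ioc 0 s) = ENNReal.ofReal (F s) := by
    intro s hs hs2
    rw [hν, withDensity_apply _ measurableSet_Ioc, Measure.restrict_restrict measurableSet_Ioc,
      Set.Ioc_inter_Ioc]
    have h1 : max (0:ℝ) 0 = 0 := by simp
    have h2 : min s (2 * π) = s := min_eq_left hs2
    rw [h1, h2, hF s, intervalIntegral.integral_of_le hs,
      ← MeasureTheory.ofReal_integral_eq_lintegral_ofReal
        (hint.mono_set (Set.Ioc_subset_Ioc le_rfl hs2))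
        (Filter.Eventually.of_forall fun x => hf x)]
  have hνuniv : ν Set.univ = 1 := by
    have h1 := hνIoc (2 * π) hπ.le le_rfl
    rw [hF2π, ENNReal.ofReal_one] at h1
    have hcompl : ν (Set.Ioc (0:ℝ) (2 * π))ᶜ = 0 := by
      rw [hν, withDensity_apply _ measurableSet_Ioc.compl,
        Measure.restrict_restrict measurableSet_Ioc.compl, Set.compl_inter_self,
        Measure.restrict_empty, lintegral_zero_measure]
    have h2 := measure_add_measure_compl (μ := ν)
      (measurableSet_Ioc : MeasurableSet (Set.Ioc (0:ℝ) (2 * π)))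
    rw [h1, hcompl, add_zero] at h2
    exact h2.symm
  haveI : IsFiniteMeasure ν := ⟨by rw [hνuniv]; exact ENNReal.one_lt_top⟩
  haveI : IsFiniteMeasure (Measure.map F ν) := Measure.isFiniteMeasure_map ν F
  refine Measure.ext_of_Iic (Measure.map F ν) _ (fun t => ?_)
  rw [Measure.map_apply hFc.measurable measurableSet_Iic]
  -- RHS
  have hRHS : (volume.restrict (Set.Ioc (0:ℝ) 1)) (Set.Iic t)
      = ENNReal.ofReal (min t 1) := by
    rw [Measure.restrict_apply measurableSet_Iic]
    have : Set.Iic t ∩ Set.Ioc (0:ℝ) 1 = Set.Ioc 0 (min t 1) := by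
      ext x
      simp only [Set.mem_inter_iff, Set.mem_Iic, Set.mem_Ioc, le_min_iff]
      tauto
    rw [this, Real.volume_Ioc, sub_zero]
  rw [hRHS]
  -- compute the preimage measure
  rcases lt_or_ge t 0 with ht | ht
  · have hempty : F ⁻¹' Set.Iic t ∩ Set.Ioc 0 (2 * π) = ∅ := by
      ext θ
      simp only [Set.mem_inter_iff, Set.mem_preimage, Set.mem_Iic, Set.mem_Ioc,
        Set.mem_empty_iff_false, iff_false, not_and, and_imp]
      intro hFθ h0 h2
      have : F 0 ≤ F θ := hmono ⟨le_rfl, hπ.le⟩ ⟨h0.le, h2⟩ h0.le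
      rw [hF0] at this
      linarith
    have : ν (F ⁻¹' Set.Iic t) = 0 := by
      rw [hν, withDensity_apply _ (measurableSet_Iic.preimage hFc.measurable),
        Measure.restrict_restrict (measurableSet_Iic.preimage hFc.measurable), hempty]
      simp
    rw [this, ENNReal.ofReal_eq_zero.mpr (by simp [min_le_iff]; left; linarith)]
  · -- t ≥ 0 case
    set S := {θ : ℝ | θ ∈ Set.Icc 0 (2 * π) ∧ F θ ≤ t} with hS
    have hSclosed : IsClosed S := by
      have : S = Set.Icc 0 (2 * π) ∩ F ⁻¹' Set.Iic t := rfl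
      rw [this]
      exact isClosed_Icc.inter (isClosed_Iic.preimage hFc)
    have hSne : S.Nonempty := ⟨0, ⟨le_rfl, hπ.le⟩, by rw [hF0]; exact ht⟩
    have hSbdd : BddAbove S := ⟨2 * π, fun x hx => hx.1.2⟩
    set s := sSup S with hs
    have hsS : s ∈ S := hSclosed.csSup_mem hSne hSbdd
    -- F s = min t 1
    have hivt : ∃ θ₀ ∈ Set.Icc 0 (2 * π), F θ₀ = min t 1 := by
      have : min t 1 ∈ Set.Icc (F 0) (F (2 * π)) := by
        rw [hF0, hF2π]
        exact ⟨le_min ht zero_le_one, min_le_right t 1⟩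
      have h := intermediate_value_Icc hπ.le (hFc.continuousOn) this
      exact h.imp fun θ₀ h => ⟨h.1, h.2⟩
    obtain ⟨θ₀, hθ₀mem, hθ₀⟩ := hivt
    have hθ₀S : θ₀ ∈ S := ⟨hθ₀mem, by rw [hθ₀]; exact min_le_left t 1⟩
    have hFs : F s = min t 1 := by
      have h1 : F s ≤ t := hsS.2
      have h2 : F s ≤ 1 := by
        rw [← hF2π]; exact hmono hsS.1 ⟨hπ.le, le_rfl⟩ hsS.1.2
      have h3 : min t 1 ≤ F s := by
        rw [← hθ₀]
        exact hmono hθ₀mem hsS.1 (le_csSup hSbdd hθ₀S)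
      exact le_antisymm (le_min h1 h2) h3
    have hset : F ⁻¹' Set.Iic t ∩ Set.Ioc 0 (2 * π) = Set.Ioc 0 s := by
      ext θ
      simp only [Set.mem_inter_iff, Set.mem_preimage, Set.mem_Iic, Set.mem_Ioc]
      constructor
      · rintro ⟨hFθ, h0, h2⟩
        exact ⟨h0, le_csSup hSbdd ⟨⟨h0.le, h2⟩, hFθ⟩⟩
      · rintro ⟨h0, hθs⟩
        have hθmem : θ ∈ Set.Icc 0 (2 * π) := ⟨h0.le, hθs.trans hsS.1.2⟩
        exact ⟨(hmono hθmem hsS.1 hθs).trans hsS.2, h0, hθmem.2⟩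
    have hnueq : ν (F ⁻¹' Set.Iic t) = ν (Set.Ioc 0 s) := by
      rw [hν, withDensity_apply _ (measurableSet_Iic.preimage hFc.measurable),
        withDensity_apply _ measurableSet_Ioc,
        Measure.restrict_restrict (measurableSet_Iic.preimage hFc.measurable),
        Measure.restrict_restrict measurableSet_Ioc, hset,
        Set.inter_eq_left.mpr (Set.Ioc_subset_Ioc le_rfl hsS.1.2)]
    rw [hnueq, hνIoc s hsS.1.1 hsS.1.2, hFs]

lemma wj_subst (f F G : ℝ → ℝ) (hfm : Measurable f) (hGm : Measurable G)
    (hf : ∀ x, 0 ≤ f x) (hG : ∀ x, 0 ≤ G x)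
    (hfint : (∫ x in (0:ℝ)..(2 * π), f x) = 1)
    (hF : ∀ θ, F θ = ∫ t in (0:ℝ)..θ, f t) (hFc : Continuous F) :
    (∫ θ in (0:ℝ)..(2 * π), G (F θ) * f θ) = ∫ u in (0:ℝ)..1, G u := by
  have hπ : (0:ℝ) < 2 * π := by positivity
  set ν := (volume.restrict (Set.Ioc 0 (2 * π))).withDensity
      (fun θ => ENNReal.ofReal (f θ)) with hν
  rw [intervalIntegral.integral_of_le hπ.le, intervalIntegral.integral_of_le zero_le_one]
  rw [MeasureTheory.integral_eq_lintegral_of_nonneg_ae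
      (Filter.Eventually.of_forall fun x => mul_nonneg (hG _) (hf _))
      (((hGm.comp hFc.measurable).mul hfm).aestronglyMeasurable),
    MeasureTheory.integral_eq_lintegral_of_nonneg_ae
      (Filter.Eventually.of_forall fun x => hG x) (hGm.aestronglyMeasurable)]
  congr 1
  calc ∫⁻ θ in Set.Ioc 0 (2 * π), ENNReal.ofReal (G (F θ) * f θ)
      = ∫⁻ θ, ENNReal.ofReal (G (F θ)) ∂ν := by
        have hwd := MeasureTheory.lintegral_withDensity_eq_lintegral_mul
          (volume.restrict (Set.Ioc 0 (2 * π))) (f := fun θ => ENNReal.ofReal (f θ))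
          hfm.ennreal_ofReal (g := fun θ => ENNReal.ofReal (G (F θ)))
          ((hGm.comp hFc.measurable).ennreal_ofReal)
        rw [hν, hwd]
        refine lintegral_congr fun θ => ?_
        rw [Pi.mul_apply, ENNReal.ofReal_mul (hG _), mul_comm]
    _ = ∫⁻ u, ENNReal.ofReal (G u) ∂(Measure.map F ν) :=
        (lintegral_map hGm.ennreal_ofReal hFc.measurable).symm
    _ = ∫⁻ u in Set.Ioc (0:ℝ) 1, ENNReal.ofReal (G u) := by
        rw [wj_push f F hfm hf hfint hF hFc]

lemma wj_inner1 (g : ℝ → ℝ) (hgint : (∫ x in (0:ℝ)..(2 * π), g x) = 1)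
    (hgper : Function.Periodic g (2 * π)) (c : ℝ) :
    (∫ u in (0:ℝ)..1, 2 * π * g (2 * π * (c - u))) = 1 := by
  have hπ : (2 * π : ℝ) ≠ 0 := by positivity
  rw [intervalIntegral.integral_const_mul]
  have h1 : (∫ u in (0:ℝ)..1, g (2 * π * (c - u)))
      = ∫ v in (c - 1)..(c - 0), g (2 * π * v) :=
    intervalIntegral.integral_comp_sub_left (fun v => g (2 * π * v)) c
  rw [h1, intervalIntegral.integral_comp_mul_left g hπ]
  have h2 : (∫ x in (2 * π * (c - 1))..(2 * π * (c - 0)), g x)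
      = ∫ x in (0:ℝ)..(0 + 2 * π), g x := by
    have := hgper.intervalIntegral_add_eq (2 * π * (c - 1)) 0
    rw [show 2 * π * (c - 1) + 2 * π = 2 * π * (c - 0) by ring] at this
    exact this
  rw [h2, zero_add, hgint, smul_eq_mul, mul_one]
  field_simp

lemma wj_inner2 (g : ℝ → ℝ) (hgint : (∫ x in (0:ℝ)..(2 * π), g x) = 1)
    (hgper : Function.Periodic g (2 * π)) (c : ℝ) :
    (∫ u in (0:ℝ)..1, 2 * π * g (2 * π * (u - c))) = 1 := by
  have hπ : (2 * π : ℝ) ≠ 0 := by positivity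
  rw [intervalIntegral.integral_const_mul]
  have h1 : (∫ u in (0:ℝ)..1, g (2 * π * (u - c)))
      = ∫ v in (0 - c)..(1 - c), g (2 * π * v) :=
    intervalIntegral.integral_comp_sub_right (fun v => g (2 * π * v)) c
  rw [h1, intervalIntegral.integral_comp_mul_left g hπ]
  have h2 : (∫ x in (2 * π * (0 - c))..(2 * π * (1 - c)), g x)
      = ∫ x in (0:ℝ)..(0 + 2 * π), g x := by
    have := hgper.intervalIntegral_add_eq (2 * π * (0 - c)) 0
    rw [show 2 * π * (0 - c) + 2 * π = 2 * π * (1 - c) by ring] at this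
    exact this
  rw [h2, zero_add, hgint, smul_eq_mul, mul_one]
  field_simp

/-- Wehrly–Johnson construction: if `f₁, f₂` are probability densities on
`[0, 2π)` with cdfs `F₁, F₂` (assumed continuous), and `g` is a `2π`-periodic probability
density, then `f(θ₁,θ₂) = 2π·g(2π(F₁(θ₁) - F₂(θ₂)))·f₁(θ₁)·f₂(θ₂)` integrates to `1`
over `[0,2π)²` and has marginal densities `f₁` and `f₂`. -/
theorem wehrly_johnson (f1 f2 g F1 F2 : ℝ → ℝ)
    (hf1m : Measurable f1) (hf2m : Measurable f2) (hgm : Measurable g)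
    (hf1 : ∀ x, 0 ≤ f1 x) (hf2 : ∀ x, 0 ≤ f2 x) (hg : ∀ x, 0 ≤ g x)
    (hf1int : (∫ x in (0:ℝ)..(2 * π), f1 x) = 1)
    (hf2int : (∫ x in (0:ℝ)..(2 * π), f2 x) = 1)
    (hgint : (∫ x in (0:ℝ)..(2 * π), g x) = 1)
    (hgper : Function.Periodic g (2 * π))
    (hF1 : ∀ θ, F1 θ = ∫ t in (0:ℝ)..θ, f1 t)
    (hF2 : ∀ θ, F2 θ = ∫ t in (0:ℝ)..θ, f2 t)
    (hF1c : Continuous F1) (hF2c : Continuous F2) :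
    (∫ θ1 in (0:ℝ)..(2 * π), ∫ θ2 in (0:ℝ)..(2 * π),
        2 * π * g (2 * π * (F1 θ1 - F2 θ2)) * f1 θ1 * f2 θ2) = 1 ∧
    (∀ θ1 ∈ Set.Ico (0:ℝ) (2 * π),
      (∫ θ2 in (0:ℝ)..(2 * π),
        2 * π * g (2 * π * (F1 θ1 - F2 θ2)) * f1 θ1 * f2 θ2) = f1 θ1) ∧
    (∀ θ2 ∈ Set.Ico (0:ℝ) (2 * π),
      (∫ θ1 in (0:ℝ)..(2 * π),
        2 * π * g (2 * π * (F1 θ1 - F2 θ2)) * f1 θ1 * f2 θ2) = f2 θ2) := by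
  have hπ : (0:ℝ) < 2 * π := by positivity
  -- key: second marginal, valid for every θ1
  have key1 : ∀ θ1 : ℝ, (∫ θ2 in (0:ℝ)..(2 * π),
      2 * π * g (2 * π * (F1 θ1 - F2 θ2)) * f1 θ1 * f2 θ2) = f1 θ1 := by
    intro θ1
    have hre : ∀ θ2 : ℝ, 2 * π * g (2 * π * (F1 θ1 - F2 θ2)) * f1 θ1 * f2 θ2
        = f1 θ1 * ((fun u => 2 * π * g (2 * π * (F1 θ1 - u))) (F2 θ2) * f2 θ2) := by
      intro θ2; ring
    simp only [hre]
    rw [intervalIntegral.integral_const_mul,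
      wj_subst f2 F2 (fun u => 2 * π * g (2 * π * (F1 θ1 - u))) hf2m
        (by fun_prop) hf2 (fun u => mul_nonneg (by positivity) (hg _)) hf2int hF2 hF2c,
      wj_inner1 g hgint hgper (F1 θ1), mul_one]
  have key2 : ∀ θ2 : ℝ, (∫ θ1 in (0:ℝ)..(2 * π),
      2 * π * g (2 * π * (F1 θ1 - F2 θ2)) * f1 θ1 * f2 θ2) = f2 θ2 := by
    intro θ2
    have hre : ∀ θ1 : ℝ, 2 * π * g (2 * π * (F1 θ1 - F2 θ2)) * f1 θ1 * f2 θ2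
        = f2 θ2 * ((fun u => 2 * π * g (2 * π * (u - F2 θ2))) (F1 θ1) * f1 θ1) := by
      intro θ1; ring
    simp only [hre]
    rw [intervalIntegral.integral_const_mul,
      wj_subst f1 F1 (fun u => 2 * π * g (2 * π * (u - F2 θ2))) hf1m
        (by fun_prop) hf1 (fun u => mul_nonneg (by positivity) (hg _)) hf1int hF1 hF1c,
      wj_inner2 g hgint hgper (F2 θ2), mul_one]
  refine ⟨?_, fun θ1 _ => key1 θ1, fun θ2 _ => key2 θ2⟩
  calc (∫ θ1 in (0:ℝ)..(2 * π), ∫ θ2 in (0:ℝ)..(2 * π),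
        2 * π * g (2 * π * (F1 θ1 - F2 θ2)) * f1 θ1 * f2 θ2)
      = ∫ θ1 in (0:ℝ)..(2 * π), f1 θ1 := by
        apply intervalIntegral.integral_congr
        intro θ1 _
        exact key1 θ1
    _ = 1 := hf1int
end

section
/- For the t copula with ν degrees of freedom and correlation matrix R, as ν → ∞ the copula converges pointwise to the Gaussian copula with the same correlation matrix: lim_{ν→∞} T_m(T⁻¹(u₁|ν),…,T⁻¹(u_m|ν) | ν, R) = Φ_m(Φ⁻¹(u₁),…,Φ⁻¹(u_m) | R) for all (u₁,…,u_m) ∈ (0,1)^m. -/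
open Real MeasureTheory Filter Topology Matrix

/-- The quadratic form `xᵀ R⁻¹ x`. -/
noncomputable def quadForm (m : ℕ) (R : Matrix (Fin m) (Fin m) ℝ) (x : Fin m → ℝ) : ℝ :=
  ∑ i, ∑ j, R⁻¹ i j * x i * x j

/-- Density of the `m`-variate Student `t` distribution with `ν` degrees of freedom,
location `0` and scale (correlation) matrix `R`. -/
noncomputable def mvtPDF (m : ℕ) (ν : ℝ) (R : Matrix (Fin m) (Fin m) ℝ)
    (x : Fin m → ℝ) : ℝ :=
  Real.Gamma ((ν + m) / 2) /
      (Real.Gamma (ν / 2) * (ν * π) ^ ((m : ℝ) / 2) * Real.sqrt R.det) *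
    (1 + quadForm m R x / ν) ^ (-(ν + m) / 2)

/-- Cdf `T_m(·|ν,R)` of the `m`-variate Student `t` distribution. -/
noncomputable def mvtCDF (m : ℕ) (ν : ℝ) (R : Matrix (Fin m) (Fin m) ℝ)
    (x : Fin m → ℝ) : ℝ :=
  ∫ y in Set.Iic x, mvtPDF m ν R y

/-- Density of the centered `m`-variate Gaussian with correlation matrix `R`. -/
noncomputable def mvNormPDF (m : ℕ) (R : Matrix (Fin m) (Fin m) ℝ)
    (x : Fin m → ℝ) : ℝ :=
  ((2 * π) ^ ((m : ℝ) / 2) * Real.sqrt R.det)⁻¹ * Real.exp (-(quadForm m R x) / 2)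

/-- Cdf `Φ_m(·|R)` of the centered `m`-variate Gaussian with correlation matrix `R`. -/
noncomputable def mvNormCDF (m : ℕ) (R : Matrix (Fin m) (Fin m) ℝ)
    (x : Fin m → ℝ) : ℝ :=
  ∫ y in Set.Iic x, mvNormPDF m R y

/-- Cdf `T(·|ν)` of the univariate Student `t` distribution with `ν` degrees of
freedom. -/
noncomputable def tCDF (ν x : ℝ) : ℝ :=
  ∫ t in Set.Iic x,
    Real.Gamma ((ν + 1) / 2) / (Real.Gamma (ν / 2) * Real.sqrt (ν * π)) *
      (1 + t ^ 2 / ν) ^ (-(ν + 1) / 2)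

/-- The standard normal cdf `Φ`. -/
noncomputable def stdNormCDF (x : ℝ) : ℝ :=
  ∫ t in Set.Iic x, (Real.sqrt (2 * π))⁻¹ * Real.exp (-t ^ 2 / 2)

section AuxLemmas

lemma aux_log_lower {t : ℝ} (ht : 0 < t) : 1 - t⁻¹ ≤ Real.log t := by
  have h := Real.log_le_sub_one_of_pos (inv_pos.mpr ht)
  rw [Real.log_inv] at h; linarith

lemma aux_mono {q : ℝ} (hq : 0 ≤ q) {a b : ℝ} (ha : 0 < a) (hab : a ≤ b) :
    a * Real.log (1 + q / a) ≤ b * Real.log (1 + q / b) := by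
  set g : ℝ → ℝ := fun x => x * (Real.log (x + q) - Real.log x) with hg
  have hd : ∀ x ∈ Set.Ioi (0:ℝ), HasDerivAt g
      ((Real.log (x + q) - Real.log x) + x * ((x + q)⁻¹ - x⁻¹)) x := by
    intro x hx
    have hx0 : (0:ℝ) < x := hx
    have h1 : HasDerivAt (fun y : ℝ => Real.log (y + q) - Real.log y)
        ((x + q)⁻¹ - x⁻¹) x := by
      have l1 : HasDerivAt (fun y : ℝ => Real.log (y + q)) ((x + q)⁻¹) x := by
        have := (Real.hasDerivAt_log (by positivity : x + q ≠ 0)).comp x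
          ((hasDerivAt_id x).add_const q)
        simpa [Function.comp_def] using this
      exact l1.sub (Real.hasDerivAt_log hx0.ne')
    have := (hasDerivAt_id x).mul h1
    simpa [hg, mul_comm, mul_assoc, add_comm, Pi.mul_def] using this
  have hmono : MonotoneOn g (Set.Ici a) := by
    apply monotoneOn_of_deriv_nonneg (convex_Ici a)
    · intro x hx
      exact (hd x (lt_of_lt_of_le ha hx)).differentiableAt.continuousAt.continuousWithinAt
    · intro x hx
      rw [interior_Ici] at hx
      exact (hd x (ha.trans hx)).differentiableAt.differentiableWithinAt
    · intro x hx
      rw [interior_Ici] at hx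
      have hx0 : (0:ℝ) < x := ha.trans hx
      rw [(hd x hx0).deriv]
      have hxq : (0:ℝ) < x + q := by linarith
      have hlog : 1 - (x + q)⁻¹ * x ≤ Real.log (x + q) - Real.log x := by
        have := aux_log_lower (t := (x + q) / x) (by positivity)
        rw [Real.log_div hxq.ne' hx0.ne'] at this
        have : 1 - ((x+q)/x)⁻¹ ≤ Real.log (x + q) - Real.log x := this
        rw [inv_div] at this
        calc 1 - (x + q)⁻¹ * x = 1 - x / (x+q) := by ring
        _ ≤ _ := this
      have hineq : x * ((x + q)⁻¹ - x⁻¹) = (x + q)⁻¹ * x - 1 := by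
        field_simp
      rw [hineq]
      linarith
  have key := hmono (Set.self_mem_Ici) (Set.mem_Ici.mpr hab) hab
  have ha' : (0:ℝ) < a := ha
  have hb' : (0:ℝ) < b := lt_of_lt_of_le ha hab
  have e1 : ∀ {x : ℝ}, 0 < x → g x = x * Real.log (1 + q / x) := by
    intro x hx
    have : (1 : ℝ) + q / x = (x + q) / x := by field_simp
    rw [this, Real.log_div (by positivity : (0:ℝ) < x + q).ne' hx.ne']
  rw [e1 ha', e1 hb'] at key
  exact key

lemma aux_rpow_bound {q ν ν₀ c : ℝ} (hq : 0 ≤ q) (h₀ : 0 < ν₀) (hν : ν₀ ≤ ν) (hc : 0 ≤ c) :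
    (1 + q / ν) ^ (-(ν + c) / 2) ≤ (1 + q / ν₀) ^ (-(ν₀ / 2)) := by
  have hν' : (0:ℝ) < ν := lt_of_lt_of_le h₀ hν
  have hb1 : (0:ℝ) < 1 + q / ν := by positivity
  have hb2 : (0:ℝ) < 1 + q / ν₀ := by positivity
  rw [Real.rpow_def_of_pos hb1, Real.rpow_def_of_pos hb2]
  apply Real.exp_le_exp.2
  have hl1 : 0 ≤ Real.log (1 + q / ν) := Real.log_nonneg (by have := div_nonneg hq hν'.le; linarith)
  have h2 := aux_mono hq h₀ hν
  nlinarith [Real.log_nonneg (show (1:ℝ) ≤ 1 + q / ν₀ by have := div_nonneg hq h₀.le; linarith)]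

lemma aux_rpow_tendsto {q : ℝ} (hq : 0 ≤ q) (c : ℝ) :
    Tendsto (fun ν : ℝ => (1 + q / ν) ^ (-(ν + c) / 2)) atTop
      (𝓝 (Real.exp (-q / 2))) := by
  have h1 : Tendsto (fun ν : ℝ => ν * Real.log (1 + q / ν)) atTop (𝓝 q) :=
    tendsto_mul_log_one_add_div_atTop q
  have h0 : Tendsto (fun ν : ℝ => 1 + q / ν) atTop (𝓝 1) := by
    simpa using ((tendsto_inv_atTop_zero.const_mul q).const_add 1).congr
      (fun ν => by rw [div_eq_mul_inv])
  have h2 : Tendsto (fun ν : ℝ => Real.log (1 + q / ν)) atTop (𝓝 0) := by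
    have := (Real.continuousAt_log one_ne_zero).tendsto.comp h0
    simpa [Function.comp_def] using this
  have h3 : Tendsto (fun ν : ℝ => (-(ν + c) / 2) * Real.log (1 + q / ν)) atTop
      (𝓝 (-q / 2)) := by
    have := ((h1.const_mul (-(1/2 : ℝ))).add (h2.const_mul (-(c/2 : ℝ))))
    have he : (-(1/2 : ℝ)) * q + (-(c/2 : ℝ)) * 0 = -q / 2 := by ring
    rw [he] at this
    exact this.congr (fun ν => by ring)
  have h4 := (Real.continuous_exp.tendsto _).comp h3
  apply h4.congr' _
  filter_upwards [eventually_gt_atTop (0:ℝ)] with ν hν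
  have hb : (0:ℝ) < 1 + q / ν := by positivity
  simp [Function.comp, Real.rpow_def_of_pos hb, mul_comm]

lemma gautschi_upper {x : ℝ} (hx : 0 < x) :
    Real.Gamma (x + 1/2) ≤ Real.Gamma x * x ^ (1/2 : ℝ) := by
  have hΓx : 0 < Real.Gamma x := Real.Gamma_pos_of_pos hx
  have hΓ1 : 0 < Real.Gamma (x + 1/2) := Real.Gamma_pos_of_pos (by linarith)
  have hconv := Real.convexOn_log_Gamma.2 (Set.mem_Ioi.mpr hx)
    (Set.mem_Ioi.mpr (show (0:ℝ) < x + 1 by linarith))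
    (by norm_num : (0:ℝ) ≤ 1/2) (by norm_num : (0:ℝ) ≤ 1/2) (by norm_num)
  have hmid : (1/2 : ℝ) • x + (1/2 : ℝ) • (x + 1) = x + 1/2 := by
    simp only [smul_eq_mul]; ring
  rw [hmid] at hconv
  simp only [Function.comp, smul_eq_mul] at hconv
  rw [Real.Gamma_add_one hx.ne', Real.log_mul hx.ne' hΓx.ne'] at hconv
  rw [← Real.log_le_log_iff hΓ1 (by positivity)]
  rw [Real.log_mul hΓx.ne' (by positivity), Real.log_rpow hx]
  linarith

lemma gautschi_lower {x : ℝ} (hx : 0 < x) :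
    Real.Gamma x * x * (x + 1/2) ^ (-(1/2) : ℝ) ≤ Real.Gamma (x + 1/2) := by
  have hΓx : 0 < Real.Gamma x := Real.Gamma_pos_of_pos hx
  have hx2 : (0:ℝ) < x + 1/2 := by linarith
  have hΓ1 : 0 < Real.Gamma (x + 1/2) := Real.Gamma_pos_of_pos hx2
  have hconv := Real.convexOn_log_Gamma.2 (Set.mem_Ioi.mpr hx2)
    (Set.mem_Ioi.mpr (show (0:ℝ) < x + 3/2 by linarith))
    (by norm_num : (0:ℝ) ≤ 1/2) (by norm_num : (0:ℝ) ≤ 1/2) (by norm_num)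
  have hmid : (1/2 : ℝ) • (x + 1/2) + (1/2 : ℝ) • (x + 3/2) = x + 1 := by
    simp only [smul_eq_mul]; ring
  rw [hmid] at hconv
  simp only [Function.comp, smul_eq_mul] at hconv
  have h32 : x + 3/2 = (x + 1/2) + 1 := by ring
  rw [h32, Real.Gamma_add_one hx2.ne', Real.log_mul hx2.ne' hΓ1.ne',
    Real.Gamma_add_one hx.ne', Real.log_mul hx.ne' hΓx.ne'] at hconv
  rw [← Real.log_le_log_iff (by positivity) hΓ1]
  rw [Real.log_mul (by positivity) (by positivity), Real.log_mul hΓx.ne' hx.ne',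
    Real.log_rpow hx2]
  linarith

lemma gamma_ratio_half :
    Tendsto (fun x : ℝ => Real.Gamma (x + 1/2) / (Real.Gamma x * x ^ (1/2 : ℝ)))
      atTop (𝓝 1) := by
  have hl : Tendsto (fun x : ℝ => (x / (x + 1/2)) ^ (1/2 : ℝ)) atTop (𝓝 1) := by
    have h1 : Tendsto (fun x : ℝ => x / (x + 1/2)) atTop (𝓝 1) := by
      have h2 : Tendsto (fun x : ℝ => x + 1/2) atTop atTop :=
        tendsto_atTop_add_const_right _ _ tendsto_id
      have h3 : Tendsto (fun x : ℝ => (1:ℝ)/2 / (x + 1/2)) atTop (𝓝 0) :=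
        tendsto_const_nhds.div_atTop h2
      have h4 := h3.const_sub (1:ℝ)
      rw [sub_zero] at h4
      apply h4.congr'
      filter_upwards [eventually_gt_atTop (0:ℝ)] with x hx
      field_simp
      ring
    have hc := (Real.continuousAt_rpow_const 1 (1/2) (Or.inl one_ne_zero)).tendsto.comp h1
    simpa [Function.comp_def] using hc
  apply tendsto_of_tendsto_of_tendsto_of_le_of_le' hl tendsto_const_nhds
  · filter_upwards [eventually_gt_atTop (0:ℝ)] with x hx
    have hΓx : 0 < Real.Gamma x := Real.Gamma_pos_of_pos hx
    have hx2 : (0:ℝ) < x + 1/2 := by linarith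
    have hrw : (x / (x + 1/2)) ^ (1/2 : ℝ) = x ^ (1/2:ℝ) * (x + 1/2) ^ (-(1/2) : ℝ) := by
      rw [Real.div_rpow hx.le hx2.le, Real.rpow_neg hx2.le, div_eq_mul_inv]
    rw [hrw, le_div_iff₀ (by positivity)]
    calc x ^ (1/2:ℝ) * (x + 1/2) ^ (-(1/2) : ℝ) * (Real.Gamma x * x ^ (1/2:ℝ))
        = Real.Gamma x * (x ^ (1/2:ℝ) * x ^ (1/2:ℝ)) * (x + 1/2) ^ (-(1/2) : ℝ) := by ring
      _ = Real.Gamma x * x * (x + 1/2) ^ (-(1/2) : ℝ) := by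
          rw [← Real.rpow_add hx]; norm_num
      _ ≤ Real.Gamma (x + 1/2) := gautschi_lower hx
  · filter_upwards [eventually_gt_atTop (0:ℝ)] with x hx
    have hΓx : 0 < Real.Gamma x := Real.Gamma_pos_of_pos hx
    rw [div_le_one (by positivity)]
    simpa using gautschi_upper hx

lemma gamma_ratio (m : ℕ) :
    Tendsto (fun x : ℝ => Real.Gamma (x + m/2) / (Real.Gamma x * x ^ ((m:ℝ)/2)))
      atTop (𝓝 1) := by
  induction m using Nat.twoStepInduction with
  | zero =>
    apply tendsto_const_nhds.congr'
    filter_upwards [eventually_gt_atTop (0:ℝ)] with x hx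
    have hΓx : 0 < Real.Gamma x := Real.Gamma_pos_of_pos hx
    simp [div_self hΓx.ne']
  | one =>
    have := gamma_ratio_half
    apply this.congr'
    filter_upwards [] with x
    norm_num
  | more m ih _ =>
    have hfac : Tendsto (fun x : ℝ => (x + m/2) / x) atTop (𝓝 1) := by
      have h3 : Tendsto (fun x : ℝ => ((m:ℝ)/2) / x) atTop (𝓝 0) :=
        tendsto_const_nhds.div_atTop tendsto_id
      have h4 := h3.const_add (1:ℝ)
      rw [add_zero] at h4
      apply h4.congr'
      filter_upwards [eventually_gt_atTop (0:ℝ)] with x hx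
      field_simp
    have := hfac.mul ih
    rw [one_mul] at this
    apply this.congr'
    filter_upwards [eventually_gt_atTop (0:ℝ)] with x hx
    have hΓx : 0 < Real.Gamma x := Real.Gamma_pos_of_pos hx
    have hxm : (0:ℝ) < x + m/2 := by positivity
    have hcast : ((m + 2 : ℕ) : ℝ) / 2 = (m:ℝ)/2 + 1 := by push_cast; ring
    have hgam : Real.Gamma (x + (m+2:ℕ)/2) = (x + m/2) * Real.Gamma (x + m/2) := by
      rw [hcast, show x + ((m:ℝ)/2 + 1) = (x + m/2) + 1 by ring,
        Real.Gamma_add_one hxm.ne']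
    have hpow : x ^ (((m+2:ℕ):ℝ)/2) = x ^ ((m:ℝ)/2) * x := by
      rw [hcast, Real.rpow_add hx, Real.rpow_one]
    rw [hgam, hpow]
    field_simp

lemma const_tendsto (c : ℕ) :
    Tendsto (fun ν : ℝ =>
        Real.Gamma ((ν + c)/2) / (Real.Gamma (ν/2) * (ν * π) ^ ((c:ℝ)/2)))
      atTop (𝓝 ((2*π) ^ (-(c:ℝ)/2))) := by
  have hhalf : Tendsto (fun ν : ℝ => ν / 2) atTop atTop :=
    tendsto_id.atTop_div_const two_pos
  have h1 := (gamma_ratio c).comp hhalf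
  have h2 := h1.mul_const ((2*π) ^ (-(c:ℝ)/2))
  rw [one_mul] at h2
  apply h2.congr'
  filter_upwards [eventually_gt_atTop (0:ℝ)] with ν hν
  have hpi : (0:ℝ) < π := Real.pi_pos
  have hν2 : (0:ℝ) < ν / 2 := by linarith
  have hsplit : (ν * π : ℝ) ^ ((c:ℝ)/2) = (ν/2) ^ ((c:ℝ)/2) * (2*π) ^ ((c:ℝ)/2) := by
    rw [← Real.mul_rpow hν2.le (by positivity)]
    ring_nf
  have hneg : ((2*π : ℝ)) ^ (-(c:ℝ)/2) = ((2*π : ℝ) ^ ((c:ℝ)/2))⁻¹ := by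
    rw [show (-(c:ℝ)/2) = -((c:ℝ)/2) by ring, Real.rpow_neg (by positivity)]
  simp only [Function.comp]
  rw [hneg, hsplit, show (ν + c)/2 = ν/2 + c/2 by ring]
  have hΓ : (0:ℝ) < Real.Gamma (ν/2) := Real.Gamma_pos_of_pos hν2
  field_simp

lemma bdd_of_tendsto {f : ℝ → ℝ} {a L : ℝ} (hc : ContinuousOn f (Set.Ici a))
    (ht : Tendsto f atTop (𝓝 L)) : ∃ K, ∀ x ∈ Set.Ici a, |f x| ≤ K := by
  have h1 : ∀ᶠ x in atTop, |f x - L| < 1 := by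
    have := Metric.tendsto_nhds.mp ht 1 one_pos
    simpa [Real.dist_eq] using this
  obtain ⟨N, hN⟩ := eventually_atTop.1 h1
  obtain ⟨C, hC⟩ := (isCompact_Icc (a := a) (b := max a N)).exists_bound_of_continuousOn
    (hc.mono (fun x hx => hx.1))
  refine ⟨max C (|L| + 1), fun x hx => ?_⟩
  rcases le_or_gt x (max a N) with h | h
  · exact le_max_of_le_left (by simpa [Real.norm_eq_abs] using hC x ⟨hx, h⟩)
  · have := hN x (le_of_lt (lt_of_le_of_lt (le_max_right a N) h))
    have : |f x| ≤ |L| + 1 := by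
      have := abs_sub_abs_le_abs_sub (f x) L
      linarith
    exact le_max_of_le_right this

lemma aux_integrable {E : Type*} [NormedAddCommGroup E] [NormedSpace ℝ E]
    [FiniteDimensional ℝ E] [MeasurableSpace E] [BorelSpace E]
    (μ : Measure E) [μ.IsAddHaarMeasure] {q : E → ℝ} (hqc : Continuous q)
    (hq0 : ∀ y, 0 ≤ q y) {c : ℝ} (hc : 0 < c) (hlow : ∀ y, c * ‖y‖^2 ≤ q y)
    {a e : ℝ} (ha : 0 < a) (he : (Module.finrank ℝ E : ℝ) < 2 * e) :
    Integrable (fun y => (1 + q y / a) ^ (-e)) μ := by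
  have he0 : 0 < e := by
    have : (0:ℝ) ≤ (Module.finrank ℝ E : ℝ) := Nat.cast_nonneg _
    linarith
  set ε : ℝ := min 1 (c / a) with hε
  have hε0 : 0 < ε := lt_min one_pos (by positivity)
  have hbase : ∀ y, (0:ℝ) < 1 + q y / a := fun y => by
    have := div_nonneg (hq0 y) ha.le; linarith
  have hbound : ∀ y : E, (1 + q y / a) ^ (-e) ≤ ε ^ (-e) * ((1:ℝ) + ‖y‖^2) ^ (-(2*e)/2) := by
    intro y
    have hkey : ε * (1 + ‖y‖^2) ≤ 1 + q y / a := by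
      have h1 : ε * 1 ≤ 1 := by
        have := min_le_left (1:ℝ) (c/a); nlinarith
      have h2 : ε * ‖y‖^2 ≤ q y / a := by
        have h3 : ε ≤ c / a := min_le_right _ _
        have h4 : ε * ‖y‖^2 ≤ (c/a) * ‖y‖^2 := by nlinarith [sq_nonneg ‖y‖]
        have h5 : (c/a) * ‖y‖^2 ≤ q y / a := by
          rw [div_mul_eq_mul_div, div_le_div_iff_of_pos_right ha]
          exact hlow y
        linarith
      nlinarith
    have hpos : (0:ℝ) < ε * (1 + ‖y‖^2) := by nlinarith [sq_nonneg ‖y‖]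
    have := Real.rpow_le_rpow_of_nonpos hpos hkey (neg_nonpos.mpr he0.le)
    refine le_trans this (le_of_eq ?_)
    rw [Real.mul_rpow hε0.le (by nlinarith [sq_nonneg ‖y‖])]
    congr 1
    congr 1
    ring
  have hint := (integrable_rpow_neg_one_add_norm_sq (E := E) (μ := μ)
    (r := 2 * e) he).const_mul (ε ^ (-e))
  refine hint.mono' ?_ (ae_of_all _ fun y => ?_)
  · apply Continuous.aestronglyMeasurable
    apply Continuous.rpow_const
    · exact continuous_const.add (hqc.div_const a)
    · intro y; exact Or.inl (hbase y).ne'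
  · rw [Real.norm_eq_abs, abs_of_nonneg (Real.rpow_nonneg (hbase y).le _)]
    exact hbound y

lemma quadForm_eq_dot (m : ℕ) (R : Matrix (Fin m) (Fin m) ℝ) (y : Fin m → ℝ) :
    quadForm m R y = y ⬝ᵥ (R⁻¹ *ᵥ y) := by
  unfold quadForm
  rw [dotProduct]
  refine Finset.sum_congr rfl fun i _ => ?_
  rw [Matrix.mulVec, dotProduct, Finset.mul_sum]
  exact Finset.sum_congr rfl fun j _ => by ring

lemma quadForm_nonneg {m : ℕ} {R : Matrix (Fin m) (Fin m) ℝ} (hR : R.PosDef)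
    (y : Fin m → ℝ) : 0 ≤ quadForm m R y := by
  rcases eq_or_ne y 0 with rfl | hy
  · simp [quadForm]
  · have h := (hR.inv).re_dotProduct_pos (𝕜 := ℝ) hy
    rw [quadForm_eq_dot]
    simpa using h.le

lemma quadForm_pos {m : ℕ} {R : Matrix (Fin m) (Fin m) ℝ} (hR : R.PosDef)
    {y : Fin m → ℝ} (hy : y ≠ 0) : 0 < quadForm m R y := by
  have h := (hR.inv).re_dotProduct_pos (𝕜 := ℝ) hy
  rw [quadForm_eq_dot]
  simpa using h

lemma quadForm_smul (m : ℕ) (R : Matrix (Fin m) (Fin m) ℝ) (t : ℝ) (y : Fin m → ℝ) :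
    quadForm m R (t • y) = t^2 * quadForm m R y := by
  unfold quadForm
  rw [Finset.mul_sum]
  refine Finset.sum_congr rfl fun i _ => ?_
  rw [Finset.mul_sum]
  refine Finset.sum_congr rfl fun j _ => ?_
  simp only [Pi.smul_apply, smul_eq_mul]
  ring

lemma quadForm_continuous (m : ℕ) (R : Matrix (Fin m) (Fin m) ℝ) :
    Continuous (quadForm m R) := by
  unfold quadForm
  refine continuous_finset_sum _ fun i _ => continuous_finset_sum _ fun j _ => ?_
  exact (continuous_const.mul (continuous_apply i)).mul (continuous_apply j)

lemma quadForm_lower {m : ℕ} {R : Matrix (Fin m) (Fin m) ℝ} (hR : R.PosDef) :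
    ∃ c > 0, ∀ y : Fin m → ℝ, c * ‖y‖^2 ≤ quadForm m R y := by
  rcases Nat.eq_zero_or_pos m with rfl | hm
  · refine ⟨1, one_pos, fun y => ?_⟩
    have hy : y = 0 := Subsingleton.elim _ _
    have h1 : ‖y‖ = 0 := by rw [hy, norm_zero]
    have h2 : quadForm 0 R y = 0 := by simp [quadForm]
    rw [h1, h2]
    norm_num
  · haveI : Nonempty (Fin m) := ⟨⟨0, hm⟩⟩
    have hsph : (Metric.sphere (0 : Fin m → ℝ) 1).Nonempty :=
      NormedSpace.sphere_nonempty.mpr zero_le_one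
    obtain ⟨z, hz, hzmin⟩ := (isCompact_sphere (0 : Fin m → ℝ) 1).exists_isMinOn hsph
      (quadForm_continuous m R).continuousOn
    have hz1 : ‖z‖ = 1 := by simpa using hz
    have hzne : z ≠ 0 := fun h => by simp [h] at hz1
    refine ⟨quadForm m R z, quadForm_pos hR hzne, fun y => ?_⟩
    rcases eq_or_ne y 0 with rfl | hy
    · simp [quadForm]
    · have hny : (0:ℝ) < ‖y‖ := norm_pos_iff.mpr hy
      set w : Fin m → ℝ := ‖y‖⁻¹ • y with hw
      have hwmem : w ∈ Metric.sphere (0 : Fin m → ℝ) 1 := by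
        simp [hw, norm_smul, abs_of_pos (inv_pos.mpr hny), inv_mul_cancel₀ hny.ne']
      have hmin : quadForm m R z ≤ quadForm m R w := hzmin hwmem
      have hyw : y = ‖y‖ • w := by
        rw [hw, smul_smul, mul_inv_cancel₀ hny.ne', one_smul]
      have hqy : quadForm m R y = ‖y‖^2 * quadForm m R w := by
        conv_lhs => rw [hyw]
        rw [quadForm_smul]
      nlinarith [sq_nonneg ‖y‖]

noncomputable def tconst (ν : ℝ) : ℝ :=
  Real.Gamma ((ν + 1) / 2) / (Real.Gamma (ν / 2) * Real.sqrt (ν * π))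

lemma contOn_gamma_comp (c : ℝ) {a : ℝ} (ha : 0 < a) (hc : 0 ≤ c) :
    ContinuousOn (fun ν : ℝ => Real.Gamma ((ν + c)/2)) (Set.Ici a) := by
  intro ν hν
  have hν' : 0 < ν := lt_of_lt_of_le ha hν
  have harg : 0 < (ν + c)/2 := by positivity
  apply ContinuousAt.continuousWithinAt
  have hg : ContinuousAt Real.Gamma ((ν + c)/2) := by
    refine (Real.differentiableAt_Gamma ?_).continuousAt
    intro n
    have : -(n:ℝ) ≤ 0 := neg_nonpos.mpr (Nat.cast_nonneg n)
    intro h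
    rw [h] at harg
    linarith
  have hin : ContinuousAt (fun ν : ℝ => (ν + c)/2) ν :=
    ((continuous_id.add continuous_const).div_const 2).continuousAt
  exact ContinuousAt.comp (g := Real.Gamma) hg hin

lemma tconst_continuousOn {a : ℝ} (ha : 0 < a) :
    ContinuousOn tconst (Set.Ici a) := by
  apply ContinuousOn.div
  · exact contOn_gamma_comp 1 ha zero_le_one
  · apply ContinuousOn.mul
    · have := contOn_gamma_comp 0 ha le_rfl
      simpa using this
    · exact (Real.continuous_sqrt.comp (continuous_id.mul continuous_const)).continuousOn
  · intro ν hν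
    have hν' : 0 < ν := lt_of_lt_of_le ha hν
    have h1 : 0 < Real.Gamma (ν/2) := Real.Gamma_pos_of_pos (by linarith)
    have h2 : 0 < Real.sqrt (ν * π) := Real.sqrt_pos.mpr (by nlinarith [Real.pi_pos])
    positivity

lemma tconst_tendsto : Tendsto tconst atTop (𝓝 (Real.sqrt (2*π))⁻¹) := by
  have h := const_tendsto 1
  have hval : ((2*π : ℝ)) ^ (-((1:ℕ):ℝ)/2) = (Real.sqrt (2*π))⁻¹ := by
    rw [Real.sqrt_eq_rpow, show (-((1:ℕ):ℝ)/2) = -(1/2 : ℝ) by norm_num,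
      Real.rpow_neg (by nlinarith [Real.pi_pos])]
  rw [hval] at h
  apply h.congr'
  filter_upwards [eventually_gt_atTop (0:ℝ)] with ν hν
  unfold tconst
  rw [Real.sqrt_eq_rpow]
  norm_num

lemma tconst_pos {ν : ℝ} (hν : 0 < ν) : 0 < tconst ν := by
  unfold tconst
  have h1 : 0 < Real.Gamma ((ν+1)/2) := Real.Gamma_pos_of_pos (by linarith)
  have h2 : 0 < Real.Gamma (ν/2) := Real.Gamma_pos_of_pos (by linarith)
  have h3 : 0 < Real.sqrt (ν * π) := Real.sqrt_pos.mpr (by nlinarith [Real.pi_pos])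
  positivity

lemma sq_integrand_integrable {a e : ℝ} (ha : 0 < a) (he : (1:ℝ) < 2 * e) :
    Integrable (fun t : ℝ => (1 + t^2/a) ^ (-e)) := by
  have h := aux_integrable (E := ℝ) volume (q := fun t : ℝ => t^2)
    (continuous_pow 2) (fun y => sq_nonneg y) one_pos
    (fun y => by rw [Real.norm_eq_abs, sq_abs, one_mul]) ha
    (by simpa [Module.finrank_self] using he)
  exact h

lemma tPDF_integrable {ν : ℝ} (hν : 0 < ν) :
    Integrable (fun t : ℝ => tconst ν * (1 + t^2/ν) ^ (-(ν+1)/2)) := by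
  have h := (sq_integrand_integrable (a := ν) (e := (ν+1)/2) hν
    (by linarith)).const_mul (tconst ν)
  apply h.congr
  filter_upwards [] with t
  rw [show (-(ν+1)/2 : ℝ) = -((ν+1)/2) by ring]

lemma tCDF_mono {ν : ℝ} (hν : 0 < ν) : Monotone (tCDF ν) := by
  intro x y hxy
  unfold tCDF
  apply setIntegral_mono_set
  · exact (tPDF_integrable hν).integrableOn
  · filter_upwards [] with t
    exact mul_nonneg (tconst_pos hν).le (Real.rpow_nonneg (by positivity) _)
  · exact HasSubset.Subset.eventuallyLE (Set.Iic_subset_Iic.mpr hxy)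

lemma tCDF_tendsto (x : ℝ) : Tendsto (fun ν => tCDF ν x) atTop (𝓝 (stdNormCDF x)) := by
  obtain ⟨K, hK⟩ := bdd_of_tendsto (tconst_continuousOn four_pos) tconst_tendsto
  have hK0 : 0 ≤ K := le_trans (abs_nonneg _) (hK 4 Set.self_mem_Ici)
  unfold tCDF stdNormCDF
  apply tendsto_integral_filter_of_dominated_convergence
    (fun t => K * (1 + t^2/4) ^ (-(2 : ℝ)))
  · filter_upwards [eventually_gt_atTop (0:ℝ)] with ν hν
    apply Continuous.aestronglyMeasurable
    apply Continuous.mul continuous_const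
    apply Continuous.rpow_const (continuous_const.add ((continuous_pow 2).div_const ν))
    intro t
    exact Or.inl (by simp only [Pi.add_apply]; positivity)
  · filter_upwards [eventually_ge_atTop (4:ℝ)] with ν hν
    apply ae_of_all
    intro t
    have hν0 : (0:ℝ) < ν := by linarith
    have h1 : ‖tconst ν * (1 + t^2/ν) ^ (-(ν+1)/2)‖
        = |tconst ν| * (1 + t^2/ν) ^ (-(ν+1)/2) := by
      rw [Real.norm_eq_abs, abs_mul, abs_of_nonneg (Real.rpow_nonneg (by positivity) _)]
    rw [show Real.Gamma ((ν + 1) / 2) / (Real.Gamma (ν / 2) * Real.sqrt (ν * π)) *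
        (1 + t ^ 2 / ν) ^ (-(ν + 1) / 2)
      = tconst ν * (1 + t^2/ν) ^ (-(ν+1)/2) from rfl, h1]
    have h2 := aux_rpow_bound (sq_nonneg t) four_pos hν zero_le_one
    have h2' : (1 + t^2/ν) ^ (-(ν+1)/2) ≤ (1 + t^2/4) ^ (-(2:ℝ)) := by
      rw [show (-(2:ℝ)) = -((4:ℝ)/2) by norm_num]
      exact h2
    apply mul_le_mul (hK ν (Set.mem_Ici.mpr hν)) h2'
      (Real.rpow_nonneg (by positivity) _) hK0
  · exact ((sq_integrand_integrable four_pos (by norm_num : (1:ℝ) < 2*2)).const_mul K).restrict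
  · apply ae_of_all
    intro t
    have := tconst_tendsto.mul (aux_rpow_tendsto (sq_nonneg t) 1)
    exact this

lemma gauss_integrable :
    Integrable (fun t : ℝ => (Real.sqrt (2*π))⁻¹ * Real.exp (-t^2/2)) := by
  have h := (integrable_exp_neg_mul_sq (b := (1/2:ℝ)) (by norm_num)).const_mul
    ((Real.sqrt (2*π))⁻¹)
  apply h.congr
  filter_upwards [] with t
  rw [show (-t^2/2 : ℝ) = -(1/2)*t^2 by ring]

lemma stdNormCDF_strictMono : StrictMono stdNormCDF := by
  intro x y hxy
  have hsplit : stdNormCDF y = stdNormCDF x +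
      ∫ t in Set.Ioc x y, (Real.sqrt (2*π))⁻¹ * Real.exp (-t^2/2) := by
    unfold stdNormCDF
    rw [← Set.Iic_union_Ioc_eq_Iic hxy.le]
    rw [setIntegral_union (Set.Iic_disjoint_Ioc le_rfl) measurableSet_Ioc
      gauss_integrable.integrableOn gauss_integrable.integrableOn]
  have hpos : 0 < ∫ t in Set.Ioc x y, (Real.sqrt (2*π))⁻¹ * Real.exp (-t^2/2) := by
    rw [setIntegral_pos_iff_support_of_nonneg_ae]
    · have hsupp : Function.support
          (fun t : ℝ => (Real.sqrt (2*π))⁻¹ * Real.exp (-t^2/2)) = Set.univ := by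
        ext t
        simp only [Function.mem_support, Set.mem_univ, iff_true]
        have h1 : 0 < Real.sqrt (2*π) := Real.sqrt_pos.mpr (by nlinarith [Real.pi_pos])
        positivity
      rw [hsupp, Set.univ_inter, Real.volume_Ioc]
      exact ENNReal.ofReal_pos.mpr (by linarith)
    · apply ae_of_all
      intro t
      have h1 : 0 < Real.sqrt (2*π) := Real.sqrt_pos.mpr (by nlinarith [Real.pi_pos])
      positivity
    · exact gauss_integrable.integrableOn
  linarith

lemma Tinv_tendsto {v : ℝ} (Tv : ℝ → ℝ) (hTv : ∀ ν > (0:ℝ), tCDF ν (Tv ν) = v)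
    {φ : ℝ} (hφ : stdNormCDF φ = v) : Tendsto Tv atTop (𝓝 φ) := by
  rw [tendsto_order]
  constructor
  · intro b hb
    have hlt : stdNormCDF b < v := by rw [← hφ]; exact stdNormCDF_strictMono hb
    filter_upwards [(tCDF_tendsto b).eventually_lt_const hlt,
      eventually_gt_atTop (0:ℝ)] with ν h1 h2
    by_contra h
    push_neg at h
    have h3 := tCDF_mono h2 h
    rw [hTv ν h2] at h3
    linarith
  · intro b hb
    have hlt : v < stdNormCDF b := by rw [← hφ]; exact stdNormCDF_strictMono hb
    filter_upwards [(tCDF_tendsto b).eventually_const_lt hlt,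
      eventually_gt_atTop (0:ℝ)] with ν h1 h2
    by_contra h
    push_neg at h
    have h3 := tCDF_mono h2 h
    rw [hTv ν h2] at h3
    linarith

end AuxLemmas

/-- as `ν → ∞`, the `t` copula with `ν` degrees of freedom and correlation
matrix `R` converges pointwise on `(0,1)^m` to the Gaussian copula with the same
correlation matrix:
`T_m(T⁻¹(u₁|ν),…,T⁻¹(u_m|ν) | ν, R) → Φ_m(Φ⁻¹(u₁),…,Φ⁻¹(u_m) | R)`. -/
theorem t_copula_tendsto_gaussian_copula (m : ℕ) (R : Matrix (Fin m) (Fin m) ℝ)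
    (hR : R.PosDef) (hdiag : ∀ i, R i i = 1)
    (Tinv : ℝ → ℝ → ℝ)
    (hTinv : ∀ ν > (0:ℝ), ∀ v ∈ Set.Ioo (0:ℝ) 1, tCDF ν (Tinv ν v) = v)
    (Φinv : ℝ → ℝ) (hΦinv : ∀ v ∈ Set.Ioo (0:ℝ) 1, stdNormCDF (Φinv v) = v)
    (u : Fin m → ℝ) (hu : ∀ i, u i ∈ Set.Ioo (0:ℝ) 1) :
    Tendsto (fun ν => mvtCDF m ν R (fun i => Tinv ν (u i))) atTop
      (nhds (mvNormCDF m R (fun i => Φinv (u i)))) := by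
  -- notation
  set xlim : Fin m → ℝ := fun i => Φinv (u i) with hxlim
  have hxi : ∀ i, Tendsto (fun ν => Tinv ν (u i)) atTop (𝓝 (xlim i)) := fun i =>
    Tinv_tendsto (fun ν => Tinv ν (u i)) (fun ν hν => hTinv ν hν (u i) (hu i))
      (hΦinv (u i) (hu i))
  have hdet : (0:ℝ) < Real.sqrt R.det := Real.sqrt_pos.mpr hR.det_pos
  obtain ⟨c, hc, hlow⟩ := quadForm_lower hR
  have hq0 := quadForm_nonneg hR
  set ν₀ : ℝ := 2 * m + 2 with hν₀
  have hν₀pos : (0:ℝ) < ν₀ := by positivity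
  -- the normalizing constant
  set D : ℝ → ℝ := fun ν => Real.Gamma ((ν + m)/2) /
      (Real.Gamma (ν/2) * (ν * π) ^ ((m:ℝ)/2) * Real.sqrt R.det) with hD
  have hDlim : Tendsto D atTop (𝓝 ((2*π) ^ (-(m:ℝ)/2) * (Real.sqrt R.det)⁻¹)) := by
    have h := (const_tendsto m).mul_const ((Real.sqrt R.det)⁻¹)
    apply h.congr
    intro ν
    simp only [hD, div_eq_mul_inv, mul_inv]
    ring
  have hDcont : ContinuousOn D (Set.Ici ν₀) := by
    apply ContinuousOn.div
    · exact contOn_gamma_comp (m:ℝ) hν₀pos (Nat.cast_nonneg m)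
    · apply ContinuousOn.mul
      · apply ContinuousOn.mul
        · have := contOn_gamma_comp 0 hν₀pos le_rfl
          simpa using this
        · apply ContinuousOn.rpow_const
            ((continuous_id.mul continuous_const).continuousOn)
          intro ν hν
          have hν' : 0 < ν := lt_of_lt_of_le hν₀pos hν
          exact Or.inl (ne_of_gt (mul_pos hν' Real.pi_pos))
      · exact continuousOn_const
    · intro ν hν
      have hν' : 0 < ν := lt_of_lt_of_le hν₀pos hν
      have h1 : 0 < Real.Gamma (ν/2) := Real.Gamma_pos_of_pos (by linarith)
      have h2 : (0:ℝ) < (ν * π) ^ ((m:ℝ)/2) :=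
        Real.rpow_pos_of_pos (by nlinarith [Real.pi_pos]) _
      positivity
  obtain ⟨K, hK⟩ := bdd_of_tendsto hDcont hDlim
  have hK0 : 0 ≤ K := le_trans (abs_nonneg _) (hK ν₀ Set.self_mem_Ici)
  -- measurable Iic
  have hIic : ∀ x : Fin m → ℝ, MeasurableSet (Set.Iic x) := fun x => measurableSet_Iic
  -- indicator functions
  set F : ℝ → (Fin m → ℝ) → ℝ :=
    fun ν => (Set.Iic (fun i => Tinv ν (u i))).indicator (mvtPDF m ν R) with hF
  -- null set
  have hnull : ∀ i, volume {y : Fin m → ℝ | y i = xlim i} = 0 := by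
    intro i
    rw [volume_pi]
    exact Measure.pi_hyperplane _ i _
  have hae : ∀ᵐ y : Fin m → ℝ, ∀ i, y i ≠ xlim i := by
    rw [ae_iff]
    apply measure_mono_null _ (measure_iUnion_null hnull)
    intro y hy
    simp only [Set.mem_setOf_eq] at hy
    push_neg at hy
    obtain ⟨i, hi⟩ := hy
    exact Set.mem_iUnion.mpr ⟨i, hi⟩
  -- DCT
  have hDCT : Tendsto (fun ν => ∫ y, F ν y) atTop
      (𝓝 (∫ y, (Set.Iic xlim).indicator (mvNormPDF m R) y)) := by
    apply tendsto_integral_filter_of_dominated_convergence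
      (fun y => K * (1 + quadForm m R y / ν₀) ^ (-(ν₀/2)))
    · filter_upwards [eventually_gt_atTop (0:ℝ)] with ν hν
      apply AEStronglyMeasurable.indicator _ (hIic _)
      apply Continuous.aestronglyMeasurable
      apply Continuous.mul continuous_const
      apply Continuous.rpow_const
        (continuous_const.add ((quadForm_continuous m R).div_const ν))
      intro y
      have := div_nonneg (hq0 y) hν.le
      exact Or.inl (by simp only [Pi.add_apply]; linarith)
    · filter_upwards [eventually_ge_atTop ν₀] with ν hν
      apply ae_of_all
      intro y
      have hν' : 0 < ν := lt_of_lt_of_le hν₀pos hν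
      refine le_trans (norm_indicator_le_norm_self _ _) ?_
      have h1 : ‖mvtPDF m ν R y‖ = |D ν| * (1 + quadForm m R y / ν) ^ (-(ν + m)/2) := by
        rw [Real.norm_eq_abs]
        rw [show mvtPDF m ν R y = D ν * (1 + quadForm m R y / ν) ^ (-(ν + m)/2) from rfl]
        rw [abs_mul, abs_of_nonneg (Real.rpow_nonneg (by
          have := div_nonneg (hq0 y) hν'.le; linarith) _)]
      rw [h1]
      exact mul_le_mul (hK ν (Set.mem_Ici.mpr hν))
        (aux_rpow_bound (hq0 y) hν₀pos hν (Nat.cast_nonneg m))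
        (Real.rpow_nonneg (by have := div_nonneg (hq0 y) hν'.le; linarith) _) hK0
    · refine Integrable.const_mul ?_ K
      apply aux_integrable volume (quadForm_continuous m R) hq0 hc hlow hν₀pos
      rw [Module.finrank_fin_fun]
      rw [hν₀]
      push_cast
      linarith
    · filter_upwards [hae] with y hy
      have hptw : Tendsto (fun ν => mvtPDF m ν R y) atTop (𝓝 (mvNormPDF m R y)) := by
        have h := hDlim.mul (aux_rpow_tendsto (hq0 y) (m:ℝ))
        have hval : (2*π) ^ (-(m:ℝ)/2) * (Real.sqrt R.det)⁻¹ *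
            Real.exp (-(quadForm m R y)/2) = mvNormPDF m R y := by
          rw [show mvNormPDF m R y = ((2 * π) ^ ((m : ℝ) / 2) * Real.sqrt R.det)⁻¹ *
            Real.exp (-(quadForm m R y) / 2) from rfl]
          rw [mul_inv, ← Real.rpow_neg (by nlinarith [Real.pi_pos]), neg_div]
        rw [← hval]
        exact h
      by_cases hcase : ∀ i, y i < xlim i
      · have hev : ∀ᶠ ν in atTop, y ∈ Set.Iic (fun i => Tinv ν (u i)) := by
          have h3 : ∀ᶠ ν in atTop, ∀ i, y i ≤ Tinv ν (u i) := by
            rw [eventually_all]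
            intro i
            filter_upwards [(hxi i).eventually_const_lt (hcase i)] with ν hν
            exact hν.le
          filter_upwards [h3] with ν hν
          exact Pi.le_def.mpr hν
        have hymem : y ∈ Set.Iic xlim := Pi.le_def.mpr fun i => (hcase i).le
        rw [Set.indicator_of_mem hymem]
        apply hptw.congr'
        filter_upwards [hev] with ν hν
        exact (Set.indicator_of_mem hν _).symm
      · push_neg at hcase
        obtain ⟨i, hi⟩ := hcase
        have hi' : xlim i < y i := lt_of_le_of_ne hi (Ne.symm (hy i))
        have hynot : y ∉ Set.Iic xlim := fun hmem => absurd (Pi.le_def.mp hmem i)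
          (not_le.mpr hi')
        rw [Set.indicator_of_notMem hynot]
        apply tendsto_const_nhds.congr'
        filter_upwards [(hxi i).eventually_lt_const hi'] with ν hν
        refine (Set.indicator_of_notMem (fun hmem => ?_) _).symm
        exact absurd (Pi.le_def.mp hmem i) (not_le.mpr hν)
  have h1 : ∀ ν, ∫ y, F ν y = mvtCDF m ν R (fun i => Tinv ν (u i)) := fun ν => by
    rw [hF]
    exact integral_indicator (hIic _)
  have h2 : ∫ y, (Set.Iic xlim).indicator (mvNormPDF m R) y = mvNormCDF m R xlim :=
    integral_indicator (hIic _)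
  rw [h2] at hDCT
  exact hDCT.congr h1
end
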